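/- arXiv:cs/0701113 — 7 statements merged into one kernel-verified Lean document; each statement's English description precedes it below -/
import Mathlib

section
/- For every well-ordering α (ordinal), every finite semigroup (S,·), and every additive labelling σ from α to S, there exists a ramseyan split for (α,σ) of height at most |S|. -/
/-- An additive labelling from a linear ordering to a semigroup. -/
def IsAdditive {α S : Type*} [LinearOrder α] [Semigroup S] (σ : α → α → S) : Prop :=
  ∀ x y z : α, x < y → y < z → σ x y * σ y z = σ x z

/-- `x` and `y` are `k`-neighbours for the split `s`. -/
def KNeighbours {α : Type*} [LinearOrder α] (s : α → ℕ) (k : ℕ) (x y : α) : Prop :=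
  s x = k ∧ s y = k ∧ ∀ z, min x y ≤ z → z ≤ max x y → k ≤ s z

/-- A split `s` is ramseyan for the additive labelling `σ`. -/
def IsRamseyanSplit {α S : Type*} [LinearOrder α] [Semigroup S]
    (σ : α → α → S) (s : α → ℕ) : Prop :=
  ∀ k : ℕ, ∀ x y x' y' : α, x < y → x' < y' →
    (∀ a ∈ ({x, y, x', y'} : Set α), ∀ b ∈ ({x, y, x', y'} : Set α), KNeighbours s k a b) →
    σ x y = σ x' y' ∧ σ x y * σ x y = σ x y

set_option linter.unusedSectionVars false

namespace FSplit

variable {T : Type*} [Semigroup T]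

/-- `a ≤_R b` : `a ∈ b T¹`. -/
def Rle (a b : T) : Prop := ∃ c : WithOne T, (a : WithOne T) = ↑b * c
/-- `a ≤_L b` : `a ∈ T¹ b`. -/
def Lle (a b : T) : Prop := ∃ c : WithOne T, (a : WithOne T) = c * ↑b
/-- `a ≤_J b`. -/
def Jle (a b : T) : Prop := ∃ c d : WithOne T, (a : WithOne T) = c * ↑b * d

def Req (a b : T) : Prop := Rle a b ∧ Rle b a
def Leq (a b : T) : Prop := Lle a b ∧ Lle b a

lemma rle_refl (a : T) : Rle a a := ⟨1, by simp⟩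
lemma lle_refl (a : T) : Lle a a := ⟨1, by simp⟩
lemma jle_refl (a : T) : Jle a a := ⟨1, 1, by simp⟩

lemma rle_trans {a b c : T} (h1 : Rle a b) (h2 : Rle b c) : Rle a c := by
  obtain ⟨u, hu⟩ := h1; obtain ⟨v, hv⟩ := h2
  exact ⟨v * u, by rw [hu, hv, mul_assoc]⟩

lemma lle_trans {a b c : T} (h1 : Lle a b) (h2 : Lle b c) : Lle a c := by
  obtain ⟨u, hu⟩ := h1; obtain ⟨v, hv⟩ := h2
  exact ⟨u * v, by rw [hu, hv, mul_assoc]⟩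

lemma jle_trans {a b c : T} (h1 : Jle a b) (h2 : Jle b c) : Jle a c := by
  obtain ⟨u, v, hu⟩ := h1; obtain ⟨p, q, hp⟩ := h2
  refine ⟨u * p, q * v, ?_⟩
  rw [hu, hp]; simp only [mul_assoc]

lemma jle_of_rle {a b : T} (h : Rle a b) : Jle a b := by
  obtain ⟨u, hu⟩ := h; exact ⟨1, u, by simpa using hu⟩

lemma jle_of_lle {a b : T} (h : Lle a b) : Jle a b := by
  obtain ⟨u, hu⟩ := h; exact ⟨u, 1, by simpa [mul_assoc] using hu⟩

lemma rle_mul (a b : T) : Rle (a * b) a := ⟨b, by simp⟩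
lemma lle_mul (a b : T) : Lle (b * a) a := ⟨b, by simp⟩

lemma req_refl (a : T) : Req a a := ⟨rle_refl a, rle_refl a⟩
lemma req_symm {a b : T} (h : Req a b) : Req b a := ⟨h.2, h.1⟩
lemma req_trans {a b c : T} (h1 : Req a b) (h2 : Req b c) : Req a c :=
  ⟨rle_trans h1.1 h2.1, rle_trans h2.2 h1.2⟩
lemma leq_refl (a : T) : Leq a a := ⟨lle_refl a, lle_refl a⟩
lemma leq_symm {a b : T} (h : Leq a b) : Leq b a := ⟨h.2, h.1⟩
lemma leq_trans {a b c : T} (h1 : Leq a b) (h2 : Leq b c) : Leq a c :=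
  ⟨lle_trans h1.1 h2.1, lle_trans h2.2 h1.2⟩

/-- idempotent power in a finite monoid -/
lemma exists_idem_pow {M : Type*} [Monoid M] [Finite M] (s : M) :
    ∃ n, 0 < n ∧ s ^ n * s ^ n = s ^ n := by
  obtain ⟨i, j, hij, h⟩ : ∃ i j, i < j ∧ s ^ i = s ^ j := by
    obtain ⟨i, j, hne, h⟩ := Finite.exists_ne_map_eq_of_infinite (fun n : ℕ => s ^ n)
    rcases lt_or_gt_of_ne hne with h' | h'
    exacts [⟨i, j, h', h⟩, ⟨j, i, h', h.symm⟩]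
  set p := j - i with hp
  have hp0 : 0 < p := by omega
  have key : ∀ m, i ≤ m → s ^ (m + p) = s ^ m := by
    intro m hm
    have : m + p = (m - i) + j := by omega
    rw [this, pow_add, ← h, ← pow_add]
    congr 1; omega
  have key2 : ∀ t m, i ≤ m → s ^ (m + t * p) = s ^ m := by
    intro t
    induction t with
    | zero => simp
    | succ t ih =>
      intro m hm
      have : m + (t + 1) * p = (m + p) + t * p := by ring
      rw [this, ih (m + p) (by omega), key m hm]
  refine ⟨(i + 1) * p, by positivity, ?_⟩
  rw [← pow_add]
  have : (i + 1) * p + (i + 1) * p = (i + 1) * p + (i + 1) * p := rfl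
  have h2 : (i+1) * p + (i+1) * p = ((i+1)*p) + (i+1) * p := rfl
  exact key2 (i+1) ((i+1)*p) (by nlinarith)

lemma key_absorb [Fintype T] {a : T} {c d : WithOne T} (h : (↑a : WithOne T) = c * ↑a * d) :
    ∃ n, 0 < n ∧ (↑a : WithOne T) = ↑a * d ^ n := by
  have iter : ∀ n : ℕ, (↑a : WithOne T) = c ^ n * ↑a * d ^ n := by
    intro n
    induction n with
    | zero => simp
    | succ n ih =>
      calc (↑a : WithOne T) = c * ↑a * d := h
        _ = c * (c ^ n * ↑a * d ^ n) * d := by rw [← ih]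
        _ = (c * c ^ n) * ↑a * (d ^ n * d) := by simp only [mul_assoc]
        _ = c ^ (n+1) * ↑a * d ^ (n+1) := by rw [← pow_succ', ← pow_succ]
  have : Finite (WithOne T) := show Finite (Option T) from inferInstance
  obtain ⟨n, hn0, hn⟩ := exists_idem_pow (c : WithOne T)
  have ha : (↑a : WithOne T) = c ^ n * ↑a * d ^ n := iter n
  have hea : c ^ n * ↑a = ↑a := by
    conv_lhs => rw [ha]
    rw [← mul_assoc, ← mul_assoc, hn]
    exact ha.symm
  refine ⟨n, hn0, ?_⟩
  conv_lhs => rw [ha]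
  rw [hea]

section StabLoc
variable [Fintype T] {U : Set T}

/-- descend U-membership through a `T¹` multiplier on the left -/
lemma memU_left (hU : ∀ a ∈ U, ∀ t : T, a * t ∈ U ∧ t * a ∈ U)
    {x y : T} {m : WithOne T} (h : (↑x : WithOne T) = m * ↑y) (hy : y ∈ U) : x ∈ U := by
  induction m using WithOne.recOneCoe with
  | one =>
    rw [one_mul] at h
    have hxy : x = y := by exact_mod_cast h
    rw [hxy]; exact hy
  | coe m =>
    rw [← WithOne.coe_mul] at h
    have hxy : x = m * y := by exact_mod_cast h
    rw [hxy]; exact (hU y hy m).2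

lemma memU_right (hU : ∀ a ∈ U, ∀ t : T, a * t ∈ U ∧ t * a ∈ U)
    {x y : T} {m : WithOne T} (h : (↑x : WithOne T) = ↑y * m) (hy : y ∈ U) : x ∈ U := by
  induction m using WithOne.recOneCoe with
  | one =>
    rw [mul_one] at h
    have hxy : x = y := by exact_mod_cast h
    rw [hxy]; exact hy
  | coe m =>
    rw [← WithOne.coe_mul] at h
    have hxy : x = y * m := by exact_mod_cast h
    rw [hxy]; exact (hU y hy m).1

/-- extract a `T`-element from `↑b * c` -/
lemma coe_extract_right (b : T) (c : WithOne T) : ∃ u : T, (↑u : WithOne T) = ↑b * c := by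
  induction c using WithOne.recOneCoe with
  | one => exact ⟨b, by simp⟩
  | coe c => exact ⟨b * c, by simp⟩

lemma coe_extract_left (b : T) (c : WithOne T) : ∃ u : T, (↑u : WithOne T) = c * ↑b := by
  induction c using WithOne.recOneCoe with
  | one => exact ⟨b, by simp⟩
  | coe c => exact ⟨c * b, by simp⟩

variable (hJ : ∀ a b : T, a ∉ U → b ∉ U → Jle a b)

include hJ

/-- generalized stability: if `↑c = ↑a * m` and both `a, c ∉ U` then `Req c a`. -/
lemma req_of_mul' {a c : T} {m : WithOne T} (hc : (↑c : WithOne T) = ↑a * m)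
    (ha : a ∉ U) (hcU : c ∉ U) : Req c a := by
  constructor
  · exact ⟨m, hc⟩
  · -- Rle a c
    obtain ⟨s, t, h⟩ := hJ a c ha hcU
    rw [hc] at h
    have h2 : (↑a : WithOne T) = s * ↑a * (m * t) := by
      conv_lhs => rw [h]
      simp only [mul_assoc]
    obtain ⟨n, hn0, hn⟩ := key_absorb h2
    obtain ⟨k, hk⟩ : ∃ k, n = k + 1 := ⟨n - 1, by omega⟩
    refine ⟨t * (m * t) ^ k, ?_⟩
    calc (↑a : WithOne T) = ↑a * (m * t) ^ n := hn
      _ = ↑a * ((m * t) * (m * t) ^ k) := by rw [hk, pow_succ']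
      _ = (↑a * m) * (t * (m * t) ^ k) := by simp only [mul_assoc]
      _ = ↑c * (t * (m * t) ^ k) := by rw [← hc]

lemma leq_of_mul' {a c : T} {m : WithOne T} (hc : (↑c : WithOne T) = m * ↑a)
    (ha : a ∉ U) (hcU : c ∉ U) : Leq c a := by
  constructor
  · exact ⟨m, hc⟩
  · obtain ⟨s, t, h⟩ := hJ a c ha hcU
    rw [hc] at h
    have h2 : (↑a : WithOne T) = (s * m) * ↑a * t := by
      conv_lhs => rw [h]
      simp only [mul_assoc]
    -- mirror of key_absorb
    have iter : ∀ n : ℕ, (↑a : WithOne T) = (s*m) ^ n * ↑a * t ^ n := by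
      intro n
      induction n with
      | zero => simp
      | succ n ih =>
        calc (↑a : WithOne T) = (s*m) * ↑a * t := h2
          _ = (s*m) * ((s*m) ^ n * ↑a * t ^ n) * t := by rw [← ih]
          _ = ((s*m) * (s*m) ^ n) * ↑a * (t ^ n * t) := by simp only [mul_assoc]
          _ = (s*m) ^ (n+1) * ↑a * t ^ (n+1) := by rw [← pow_succ', ← pow_succ]
    have : Finite (WithOne T) := show Finite (Option T) from inferInstance
    obtain ⟨n, hn0, hn⟩ := exists_idem_pow ((t : WithOne T))
    have ha' : (↑a : WithOne T) = (s*m) ^ n * ↑a * t ^ n := iter n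
    have hea : (↑a : WithOne T) * t ^ n = ↑a := by
      conv_lhs => rw [ha']
      rw [mul_assoc, mul_assoc, hn, ← mul_assoc]
      exact ha'.symm
    have key : (↑a : WithOne T) = (s*m)^n * ↑a := by
      conv_lhs => rw [ha']
      rw [mul_assoc, hea]
    obtain ⟨k, hk⟩ : ∃ k, n = k + 1 := ⟨n - 1, by omega⟩
    refine ⟨(s*m) ^ k * s, ?_⟩
    calc (↑a : WithOne T) = (s*m)^n * ↑a := key
      _ = ((s*m)^k * (s*m)) * ↑a := by rw [hk, pow_succ]
      _ = ((s*m)^k * s) * (m * ↑a) := by simp only [mul_assoc]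
      _ = ((s*m)^k * s) * ↑c := by rw [← hc]

/-- Clifford–Miller location theorem, constructive form. -/
lemma loc (hU : ∀ a ∈ U, ∀ t : T, a * t ∈ U ∧ t * a ∈ U)
    {a b : T} (ha : a ∉ U) (hb : b ∉ U) (hab : a * b ∉ U) :
    ∃ u : T, u * u = u ∧ u ∉ U ∧ Req u b ∧ Leq u a := by
  have h1 : Req (a * b) a := req_of_mul' hJ (WithOne.coe_mul a b) ha hab
  have h2 : Leq (a * b) b := leq_of_mul' hJ (WithOne.coe_mul a b) hb hab
  obtain ⟨c, hc⟩ := h1.2  -- ↑a = ↑(a*b) * c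
  obtain ⟨d, hd⟩ := h2.2  -- ↑b = d * ↑(a*b)
  rw [WithOne.coe_mul] at hc hd
  -- hc : ↑a = ↑a * ↑b * c ; hd : ↑b = d * (↑a * ↑b)
  obtain ⟨u, hu⟩ := coe_extract_right b c  -- ↑u = ↑b * c
  have hub : (↑u : WithOne T) * ↑b = ↑b := by
    rw [hu]
    calc (↑b : WithOne T) * c * ↑b = (d * (↑a * ↑b)) * c * ↑b := by rw [← hd]
      _ = d * ((↑a * ↑b * c) * ↑b) := by simp only [mul_assoc]
      _ = d * (↑a * ↑b) := by rw [← hc]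
      _ = ↑b := hd.symm
  have hubT : u * b = b := by
    have : ((u * b : T) : WithOne T) = ↑b := by rw [WithOne.coe_mul, hub]
    exact_mod_cast this
  refine ⟨u, ?_, ?_, ⟨⟨c, hu⟩, ⟨↑b, hub.symm⟩⟩, ?_⟩
  · -- u * u = u
    have : ((u * u : T) : WithOne T) = ↑u := by
      rw [WithOne.coe_mul, hu]
      calc (↑b : WithOne T) * c * (↑b * c) = ((↑b * c) * ↑b) * c := by simp only [mul_assoc]
        _ = ↑b * c := by rw [← hu, hub, hu]
    exact_mod_cast this
  · intro huU
    exact hb (hubT ▸ (hU u huU b).1)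
  · -- Leq u a
    constructor
    · refine ⟨d, ?_⟩
      rw [hu]
      calc (↑b : WithOne T) * c = (d * (↑a * ↑b)) * c := by rw [← hd]
        _ = d * (↑a * ↑b * c) := by simp only [mul_assoc]
        _ = d * ↑a := by rw [← hc]
    · exact ⟨↑a, by rw [hu, ← mul_assoc, ← hc]⟩

/-- H-class witness: some `c` with `Req c a`, `Leq c b`. -/
lemma hwit (hU : ∀ a ∈ U, ∀ t : T, a * t ∈ U ∧ t * a ∈ U) {a b : T} (ha : a ∉ U) (hb : b ∉ U) :
    ∃ c : T, c ∉ U ∧ Req c a ∧ Leq c b := by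
  obtain ⟨s, t, h⟩ := hJ b a hb ha  -- ↑b = s * ↑a * t
  obtain ⟨u, hu⟩ := coe_extract_right a t  -- ↑u = ↑a * t
  have hbu : (↑b : WithOne T) = s * ↑u := by rw [hu, ← mul_assoc, h]
  have huU : u ∉ U := by
    intro huU
    exact hb (memU_left hU hbu huU)
  exact ⟨u, huU, req_of_mul' hJ hu ha huU, leq_symm (leq_of_mul' hJ hbu huU hb)⟩

end StabLoc

section IdemLemmas

lemma idem_left_id {u w : T} (hu : u * u = u) (hw : Rle w u) : u * w = w := by
  obtain ⟨c, hc⟩ := hw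
  have : ((u * w : T) : WithOne T) = ↑w := by
    rw [WithOne.coe_mul, hc, ← mul_assoc, ← WithOne.coe_mul, hu]
  exact_mod_cast this

lemma idem_right_id {u w : T} (hu : u * u = u) (hw : Lle w u) : w * u = w := by
  obtain ⟨c, hc⟩ := hw
  have : ((w * u : T) : WithOne T) = ↑w := by
    rw [WithOne.coe_mul, hc, mul_assoc, ← WithOne.coe_mul, hu]
  exact_mod_cast this

lemma idem_unique {u v : T} (hu : u * u = u) (hv : v * v = v)
    (hr : Req u v) (hl : Leq u v) : u = v := by
  have h1 : v * u = v := idem_right_id hu hl.2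
  have h2 : v * u = u := idem_left_id hv hr.1
  rw [← h1, h2]

end IdemLemmas



section CoreSec

open Classical

variable {T : Type*} [Semigroup T] [Fintype T]
variable {α : Type*} [LinearOrder α] [WellFoundedLT α]

noncomputable def succA (x : α) : α :=
  if h : ∃ y, x < y then (wellFounded_lt).min {y | x < y} h else x

lemma succA_lt {x : α} (h : ∃ y, x < y) : x < succA x := by
  rw [succA, dif_pos h]
  exact (wellFounded_lt).min_mem {y | x < y} h

lemma succA_le {x y : α} (hxy : x < y) : succA x ≤ y := by
  rw [succA, dif_pos ⟨y, hxy⟩]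
  exact not_lt.mp ((wellFounded_lt).not_lt_min {y' | x < y'} hxy)

variable (U : Set T) (σ : α → α → T) (x₀ : α) (a₀ j₀ : T)

noncomputable def rho (x : α) : T := if ∃ y, x < y then σ x (succA x) else j₀

noncomputable def ell (x : α) : T := if x = x₀ then a₀ else σ x₀ x

variable {U σ x₀ a₀ j₀}
variable (hU : ∀ a ∈ U, ∀ t : T, a * t ∈ U ∧ t * a ∈ U)
variable (hJ : ∀ a b : T, a ∉ U → b ∉ U → Jle a b)
variable (hσ : IsAdditive σ)
variable (hval : ∀ x y : α, x < y → σ x y ∉ U)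
variable (hx₀ : ∀ z, x₀ ≤ z)
variable (hj₀ : j₀ ∉ U)
variable (ha₀ : a₀ ∉ U)
variable (ha₀m : a₀ * σ x₀ (succA x₀) ∉ U)


lemma rho_eq {x : α} (h : ∃ y, x < y) : rho σ j₀ x = σ x (succA x) := if_pos h

include hval hj₀ in
lemma rho_notU (x : α) : rho σ j₀ x ∉ U := by
  rw [rho]
  split
  · next h => exact hval _ _ (succA_lt h)
  · exact hj₀

lemma ell_eq {x : α} (h : x ≠ x₀) : ell σ x₀ a₀ x = σ x₀ x := if_neg h

include hval hx₀ ha₀ in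
lemma ell_notU (x : α) : ell σ x₀ a₀ x ∉ U := by
  rw [ell]
  split
  · exact ha₀
  · next h => exact hval _ _ (lt_of_le_of_ne (hx₀ x) (Ne.symm h))

include hJ hσ hval hj₀ in
lemma sigma_req {x y : α} (h : x < y) : Req (σ x y) (rho σ j₀ x) := by
  rw [rho_eq ⟨y, h⟩]
  rcases eq_or_lt_of_le (succA_le h) with he | hlt
  · rw [he]; exact req_refl _
  · have hprod : σ x (succA x) * σ (succA x) y = σ x y := hσ x (succA x) y (succA_lt ⟨y, h⟩) hlt
    refine req_of_mul' hJ (m := ↑(σ (succA x) y)) ?_ (hval _ _ (succA_lt ⟨y, h⟩)) (hval _ _ h)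
    rw [← WithOne.coe_mul, hprod]

include hJ hσ hval hx₀ ha₀ in
lemma sigma_leq {x y : α} (h : x < y) : Leq (σ x y) (ell σ x₀ a₀ y) := by
  have hy0 : y ≠ x₀ := fun he => absurd (he ▸ h) (not_lt.mpr (hx₀ x))
  rw [ell_eq hy0]
  rcases eq_or_lt_of_le (hx₀ x) with he | hlt
  · rw [← he]; exact leq_refl _
  · have hprod : σ x₀ x * σ x y = σ x₀ y := hσ x₀ x y hlt h
    refine leq_symm (leq_of_mul' hJ (m := ↑(σ x₀ x)) ?_ (hval _ _ h) (hval _ _ (lt_trans hlt h)))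
    rw [← WithOne.coe_mul, hprod]

include hσ hval hx₀ ha₀ ha₀m hj₀ in
lemma ellrho_notU {x : α} (hnm : ∃ y, x < y) : ell σ x₀ a₀ x * rho σ j₀ x ∉ U := by
  rw [rho_eq hnm]
  by_cases hx : x = x₀
  · subst hx; rw [ell, if_pos rfl]; exact ha₀m
  · rw [ell_eq hx]
    have h0 : x₀ < x := lt_of_le_of_ne (hx₀ x) (Ne.symm hx)
    rw [hσ x₀ x (succA x) h0 (succA_lt hnm)]
    exact hval _ _ (lt_trans h0 (succA_lt hnm))

variable (U σ x₀ a₀ j₀) in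
noncomputable def eI (x : α) : T :=
  if h : (∀ a ∈ U, ∀ t : T, a * t ∈ U ∧ t * a ∈ U) ∧ (∀ a b : T, a ∉ U → b ∉ U → Jle a b) ∧
      ell σ x₀ a₀ x ∉ U ∧ rho σ j₀ x ∉ U ∧ ell σ x₀ a₀ x * rho σ j₀ x ∉ U then
    (loc h.2.1 h.1 h.2.2.1 h.2.2.2.1 h.2.2.2.2).choose
  else j₀

include hU hJ hσ hval hx₀ hj₀ ha₀ ha₀m in
lemma eI_spec {x : α} (hnm : ∃ y, x < y) :
    eI U σ x₀ a₀ j₀ x * eI U σ x₀ a₀ j₀ x = eI U σ x₀ a₀ j₀ x ∧ eI U σ x₀ a₀ j₀ x ∉ U ∧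
      Req (eI U σ x₀ a₀ j₀ x) (rho σ j₀ x) ∧ Leq (eI U σ x₀ a₀ j₀ x) (ell σ x₀ a₀ x) := by
  have hcond : (∀ a ∈ U, ∀ t : T, a * t ∈ U ∧ t * a ∈ U) ∧ (∀ a b : T, a ∉ U → b ∉ U → Jle a b) ∧
      ell σ x₀ a₀ x ∉ U ∧ rho σ j₀ x ∉ U ∧ ell σ x₀ a₀ x * rho σ j₀ x ∉ U :=
    ⟨hU, hJ, ell_notU hval hx₀ ha₀ x, rho_notU hval hj₀ x, ellrho_notU hσ hval hx₀ hj₀ ha₀ ha₀m hnm⟩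
  rw [eI, dif_pos hcond]
  exact (loc hcond.2.1 hcond.1 hcond.2.2.1 hcond.2.2.2.1 hcond.2.2.2.2).choose_spec

variable (U j₀) in
noncomputable def hwE (a b : T) : T :=
  if h : (∀ a ∈ U, ∀ t : T, a * t ∈ U ∧ t * a ∈ U) ∧ (∀ a b : T, a ∉ U → b ∉ U → Jle a b) ∧
      a ∉ U ∧ b ∉ U then
    (hwit h.2.1 h.1 h.2.2.1 h.2.2.2).choose
  else j₀

include hU hJ in
lemma hwE_spec {a b : T} (ha : a ∉ U) (hb : b ∉ U) :
    hwE U j₀ a b ∉ U ∧ Req (hwE U j₀ a b) a ∧ Leq (hwE U j₀ a b) b := by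
  have hcond : _ ∧ _ ∧ _ ∧ _ := ⟨hU, hJ, ha, hb⟩
  rw [hwE, dif_pos hcond]
  exact (hwit hcond.2.1 hcond.1 hcond.2.2.1 hcond.2.2.2).choose_spec

variable (σ x₀ a₀ j₀) in
def typeEq (x y : α) : Prop :=
  Req (rho σ j₀ x) (rho σ j₀ y) ∧ Leq (ell σ x₀ a₀ x) (ell σ x₀ a₀ y)

variable (σ x₀ a₀ j₀) in
def cls (x y : α) : Prop :=
  typeEq σ x₀ a₀ j₀ x y ∧
    (x = y ∨ (x < y ∧ σ x y * σ x y = σ x y) ∨ (y < x ∧ σ y x * σ y x = σ y x))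

lemma te_refl (x : α) : typeEq σ x₀ a₀ j₀ x x := ⟨req_refl _, leq_refl _⟩
lemma te_symm {x y : α} (h : typeEq σ x₀ a₀ j₀ x y) : typeEq σ x₀ a₀ j₀ y x :=
  ⟨req_symm h.1, leq_symm h.2⟩
lemma te_trans {x y z : α} (h1 : typeEq σ x₀ a₀ j₀ x y) (h2 : typeEq σ x₀ a₀ j₀ y z) :
    typeEq σ x₀ a₀ j₀ x z := ⟨req_trans h1.1 h2.1, leq_trans h1.2 h2.2⟩

lemma cls_refl (x : α) : cls σ x₀ a₀ j₀ x x := ⟨te_refl x, Or.inl rfl⟩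
lemma cls_symm {x y : α} (h : cls σ x₀ a₀ j₀ x y) : cls σ x₀ a₀ j₀ y x := by
  refine ⟨te_symm h.1, ?_⟩
  rcases h.2 with h' | h' | h'
  exacts [Or.inl h'.symm, Or.inr (Or.inr h'), Or.inr (Or.inl h')]

lemma cls_te {x y : α} (h : cls σ x₀ a₀ j₀ x y) : typeEq σ x₀ a₀ j₀ x y := h.1

include hJ hσ hval hx₀ hj₀ ha₀ in
lemma lemA {x y x' y' : α} (hxy : x < y) (hxy' : x' < y')
    (hR : Req (rho σ j₀ x) (rho σ j₀ x')) (hL : Leq (ell σ x₀ a₀ y) (ell σ x₀ a₀ y'))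
    (h1 : σ x y * σ x y = σ x y) (h2 : σ x' y' * σ x' y' = σ x' y') :
    σ x y = σ x' y' := by
  apply idem_unique h1 h2
  · exact req_trans (sigma_req hJ hσ hval hj₀ hxy)
      (req_trans hR (req_symm (sigma_req hJ hσ hval hj₀ hxy')))
  · exact leq_trans (sigma_leq hJ hσ hval hx₀ ha₀ hxy)
      (leq_trans hL (leq_symm (sigma_leq hJ hσ hval hx₀ ha₀ hxy')))

include hJ hσ hval hx₀ hj₀ ha₀ in
lemma lemB {x y z : α} (h1 : x < y) (h2 : y < z)
    (c1 : cls σ x₀ a₀ j₀ x y) (c2 : cls σ x₀ a₀ j₀ y z) :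
    σ x z * σ x z = σ x z := by
  have i1 : σ x y * σ x y = σ x y := by
    rcases c1.2 with h | h | h
    · exact absurd h (ne_of_lt h1)
    · exact h.2
    · exact absurd h.1 (not_lt.mpr (le_of_lt h1))
  have i2 : σ y z * σ y z = σ y z := by
    rcases c2.2 with h | h | h
    · exact absurd h (ne_of_lt h2)
    · exact h.2
    · exact absurd h.1 (not_lt.mpr (le_of_lt h2))
  have heq : σ x y = σ y z := lemA hJ hσ hval hx₀ hj₀ ha₀ h1 h2 c1.1.1 c2.1.2 i1 i2
  have hadd : σ x y * σ y z = σ x z := hσ x y z h1 h2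
  rw [← hadd, ← heq, i1, i1]

include hJ hσ hval hx₀ hj₀ ha₀ in
lemma lemC {x y z : α} (h1 : x < y) (h2 : y < z)
    (c1 : cls σ x₀ a₀ j₀ x y) (c2 : cls σ x₀ a₀ j₀ x z) :
    σ y z * σ y z = σ y z ∧ σ y z = σ x y := by
  have i1 : σ x y * σ x y = σ x y := by
    rcases c1.2 with h | h | h
    · exact absurd h (ne_of_lt h1)
    · exact h.2
    · exact absurd h.1 (not_lt.mpr (le_of_lt h1))
  have i2 : σ x z * σ x z = σ x z := by
    rcases c2.2 with h | h | h
    · exact absurd h (ne_of_lt (lt_trans h1 h2))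
    · exact h.2
    · exact absurd h.1 (not_lt.mpr (le_of_lt (lt_trans h1 h2)))
  -- typeEq y z
  have tyz : typeEq σ x₀ a₀ j₀ y z := te_trans (te_symm c1.1) c2.1
  have heq : σ x y = σ x z := lemA hJ hσ hval hx₀ hj₀ ha₀ h1 (lt_trans h1 h2)
    (req_refl _) tyz.2 i1 i2
  have hadd : σ x y * σ y z = σ x z := hσ x y z h1 h2
  have hkey : σ x y = σ x y * σ y z := by rw [hadd, ← heq]
  have hRle : Rle (σ y z) (σ x y) := by
    refine rle_trans (sigma_req hJ hσ hval hj₀ h2).1 (rle_trans c1.1.1.2 ?_)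
    exact (sigma_req hJ hσ hval hj₀ h1).2
  have hid : σ x y * σ y z = σ y z := idem_left_id i1 hRle
  have : σ y z = σ x y := by rw [← hid, ← hkey]
  exact ⟨by rw [this]; exact i1, this⟩

include hJ hσ hval hx₀ hj₀ ha₀ in
lemma lemD {x y z : α} (h1 : x < y) (h2 : y < z)
    (c1 : cls σ x₀ a₀ j₀ y z) (c2 : cls σ x₀ a₀ j₀ x z) :
    σ x y * σ x y = σ x y ∧ σ x y = σ y z := by
  have i1 : σ y z * σ y z = σ y z := by
    rcases c1.2 with h | h | h
    · exact absurd h (ne_of_lt h2)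
    · exact h.2
    · exact absurd h.1 (not_lt.mpr (le_of_lt h2))
  have i2 : σ x z * σ x z = σ x z := by
    rcases c2.2 with h | h | h
    · exact absurd h (ne_of_lt (lt_trans h1 h2))
    · exact h.2
    · exact absurd h.1 (not_lt.mpr (le_of_lt (lt_trans h1 h2)))
  have txy : typeEq σ x₀ a₀ j₀ x y := te_trans c2.1 (te_symm c1.1)
  have heq : σ y z = σ x z := lemA hJ hσ hval hx₀ hj₀ ha₀ h2 (lt_trans h1 h2)
    (req_symm txy.1) (leq_refl _) i1 i2
  have hadd : σ x y * σ y z = σ x z := hσ x y z h1 h2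
  have hkey : σ y z = σ x y * σ y z := by rw [hadd, ← heq]
  have hLle : Lle (σ x y) (σ y z) := by
    refine lle_trans (sigma_leq hJ hσ hval hx₀ ha₀ h1).1 (lle_trans c1.1.2.1 ?_)
    exact (sigma_leq hJ hσ hval hx₀ ha₀ h2).2
  have hid : σ x y * σ y z = σ x y := idem_right_id i1 hLle
  have : σ x y = σ y z := by rw [← hid, ← hkey]
  exact ⟨by rw [this]; exact i1, this⟩

include hJ hσ hval hx₀ hj₀ ha₀ in
lemma cls_trans {x y z : α} (c1 : cls σ x₀ a₀ j₀ x y) (c2 : cls σ x₀ a₀ j₀ y z) :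
    cls σ x₀ a₀ j₀ x z := by
  have hte : typeEq σ x₀ a₀ j₀ x z := te_trans c1.1 c2.1
  rcases eq_or_ne x y with rfl | hxy
  · exact c2
  rcases eq_or_ne y z with rfl | hyz
  · exact c1
  rcases eq_or_ne x z with rfl | hxz
  · exact cls_refl x
  refine ⟨hte, ?_⟩
  rcases lt_trichotomy x y with h1 | h1 | h1
  · rcases lt_trichotomy y z with h2 | h2 | h2
    · -- x < y < z
      exact Or.inr (Or.inl ⟨lt_trans h1 h2, lemB hJ hσ hval hx₀ hj₀ ha₀ h1 h2 c1 c2⟩)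
    · exact absurd h2 hyz
    · -- x < y, z < y
      rcases lt_trichotomy x z with h3 | h3 | h3
      · -- x < z < y : lemD with (x,z,y) using cls z y, cls x y
        exact Or.inr (Or.inl ⟨h3, (lemD hJ hσ hval hx₀ hj₀ ha₀ h3 h2 (cls_symm c2) c1).1⟩)
      · exact absurd h3 hxz
      · -- z < x < y : lemC with (z,x,y) using cls z x? we have cls z y (symm c2), cls x y
        -- lemC (z,x,y): needs cls z x?? no: lemC h1 h2 c1 c2 : cls a b, cls a c with a<b<c
        -- here a := z, b := x, c := y: need cls z x (unknown) -- use lemD instead: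
        -- lemD (z,x,y): cls x y, cls z y → result about σ z x
        exact Or.inr (Or.inr ⟨h3, (lemD hJ hσ hval hx₀ hj₀ ha₀ h3 h1 c1 (cls_symm c2)).1⟩)
  · exact absurd h1 hxy
  · rcases lt_trichotomy y z with h2 | h2 | h2
    · -- y < x, y < z
      rcases lt_trichotomy x z with h3 | h3 | h3
      · -- y < x < z : lemC (y,x,z): cls y x, cls y z → σ x z
        exact Or.inr (Or.inl ⟨h3, (lemC hJ hσ hval hx₀ hj₀ ha₀ h1 h3 (cls_symm c1) c2).1⟩)
      · exact absurd h3 hxz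
      · -- y < z < x : lemC (y,z,x): cls y z, cls y x → σ z x
        exact Or.inr (Or.inr ⟨h3, (lemC hJ hσ hval hx₀ hj₀ ha₀ h2 h3 c2 (cls_symm c1)).1⟩)
    · exact absurd h2 hyz
    · -- z < y < x : lemB
      exact Or.inr (Or.inr ⟨lt_trans h2 h1,
        lemB hJ hσ hval hx₀ hj₀ ha₀ h2 h1 (cls_symm c2) (cls_symm c1)⟩)

omit [Semigroup T] [Fintype T] in
lemma wfmin_eq {s t : Set α} (h : s = t) (hs : s.Nonempty) :
    (wellFounded_lt).min s hs = (wellFounded_lt).min t (h ▸ hs) := by subst h; rfl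

variable (σ x₀ a₀ j₀) in
noncomputable def tmin (x : α) : α :=
  (wellFounded_lt).min {y | typeEq σ x₀ a₀ j₀ y x} ⟨x, te_refl x⟩

variable (σ x₀ a₀ j₀) in
noncomputable def cmin (x : α) : α :=
  (wellFounded_lt).min {y | cls σ x₀ a₀ j₀ y x} ⟨x, cls_refl x⟩

lemma tmin_te (x : α) : typeEq σ x₀ a₀ j₀ (tmin σ x₀ a₀ j₀ x) x :=
  (wellFounded_lt).min_mem {y | typeEq σ x₀ a₀ j₀ y x} ⟨x, te_refl x⟩

lemma cmin_cls (x : α) : cls σ x₀ a₀ j₀ (cmin σ x₀ a₀ j₀ x) x :=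
  (wellFounded_lt).min_mem {y | cls σ x₀ a₀ j₀ y x} ⟨x, cls_refl x⟩

lemma tmin_min {x y : α} (h : typeEq σ x₀ a₀ j₀ y x) : tmin σ x₀ a₀ j₀ x ≤ y :=
  not_lt.mp ((wellFounded_lt).not_lt_min {y' | typeEq σ x₀ a₀ j₀ y' x} h)

lemma cmin_min {x y : α} (h : cls σ x₀ a₀ j₀ y x) : cmin σ x₀ a₀ j₀ x ≤ y :=
  not_lt.mp ((wellFounded_lt).not_lt_min {y' | cls σ x₀ a₀ j₀ y' x} h)

lemma tmin_congr {x y : α} (h : typeEq σ x₀ a₀ j₀ x y) :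
    tmin σ x₀ a₀ j₀ x = tmin σ x₀ a₀ j₀ y := by
  have hset : {z | typeEq σ x₀ a₀ j₀ z x} = {z | typeEq σ x₀ a₀ j₀ z y} :=
    Set.ext fun z => ⟨fun hz => te_trans hz h, fun hz => te_trans hz (te_symm h)⟩
  exact wfmin_eq hset _

include hJ hσ hval hx₀ hj₀ ha₀ in
lemma cmin_congr {x y : α} (h : cls σ x₀ a₀ j₀ x y) :
    cmin σ x₀ a₀ j₀ x = cmin σ x₀ a₀ j₀ y := by
  have hset : {z | cls σ x₀ a₀ j₀ z x} = {z | cls σ x₀ a₀ j₀ z y} :=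
    Set.ext fun z => ⟨fun hz => cls_trans hJ hσ hval hx₀ hj₀ ha₀ hz h,
      fun hz => cls_trans hJ hσ hval hx₀ hj₀ ha₀ hz (cls_symm h)⟩
  exact wfmin_eq hset _

lemma tmin_le_cmin (x : α) : tmin σ x₀ a₀ j₀ x ≤ cmin σ x₀ a₀ j₀ x :=
  tmin_min (cls_te (cmin_cls x))

variable (U σ x₀ a₀ j₀) in
noncomputable def Phi (x : α) : T :=
  if cmin σ x₀ a₀ j₀ x = tmin σ x₀ a₀ j₀ x then
    (if ∃ z, tmin σ x₀ a₀ j₀ x < z then eI U σ x₀ a₀ j₀ (tmin σ x₀ a₀ j₀ x)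
     else hwE U j₀ (rho σ j₀ (tmin σ x₀ a₀ j₀ x)) (ell σ x₀ a₀ (tmin σ x₀ a₀ j₀ x)))
  else σ (tmin σ x₀ a₀ j₀ x) (cmin σ x₀ a₀ j₀ x)

include hJ hσ hval hx₀ hj₀ ha₀ in
lemma Phi_congr {x y : α} (h : cls σ x₀ a₀ j₀ x y) :
    Phi U σ x₀ a₀ j₀ x = Phi U σ x₀ a₀ j₀ y := by
  unfold Phi
  rw [tmin_congr (cls_te h), cmin_congr hJ hσ hval hx₀ hj₀ ha₀ h]

include hU hJ hσ hval hx₀ hj₀ ha₀ ha₀m in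
lemma Phi_spec (x : α) :
    Phi U σ x₀ a₀ j₀ x ∉ U ∧ Req (Phi U σ x₀ a₀ j₀ x) (rho σ j₀ (tmin σ x₀ a₀ j₀ x)) ∧
      Leq (Phi U σ x₀ a₀ j₀ x) (ell σ x₀ a₀ (tmin σ x₀ a₀ j₀ x)) := by
  unfold Phi
  by_cases h1 : cmin σ x₀ a₀ j₀ x = tmin σ x₀ a₀ j₀ x
  · rw [if_pos h1]
    by_cases h2 : ∃ z, tmin σ x₀ a₀ j₀ x < z
    · rw [if_pos h2]
      obtain ⟨hi, hnU, hR, hL⟩ := eI_spec hU hJ hσ hval hx₀ hj₀ ha₀ ha₀m h2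
      exact ⟨hnU, hR, hL⟩
    · rw [if_neg h2]
      obtain ⟨hnU, hR, hL⟩ := hwE_spec hU hJ (rho_notU hval hj₀ _) (ell_notU hval hx₀ ha₀ _)
      exact ⟨hnU, hR, hL⟩
  · rw [if_neg h1]
    have hlt : tmin σ x₀ a₀ j₀ x < cmin σ x₀ a₀ j₀ x :=
      lt_of_le_of_ne (tmin_le_cmin x) (Ne.symm h1)
    have hte : typeEq σ x₀ a₀ j₀ (cmin σ x₀ a₀ j₀ x) (tmin σ x₀ a₀ j₀ x) :=
      te_trans (cls_te (cmin_cls x)) (te_symm (tmin_te x))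
    exact ⟨hval _ _ hlt, sigma_req hJ hσ hval hj₀ hlt,
      leq_trans (sigma_leq hJ hσ hval hx₀ ha₀ hlt) hte.2⟩

include hU hJ hσ hval hx₀ hj₀ ha₀ ha₀m in
lemma Phi_idem_of_eq {x : α} {m : α} (hm : tmin σ x₀ a₀ j₀ x < m)
    (h : Phi U σ x₀ a₀ j₀ x = σ (tmin σ x₀ a₀ j₀ x) m)
    (hcm : cmin σ x₀ a₀ j₀ x = tmin σ x₀ a₀ j₀ x) :
    σ (tmin σ x₀ a₀ j₀ x) m * σ (tmin σ x₀ a₀ j₀ x) m = σ (tmin σ x₀ a₀ j₀ x) m := by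
  -- in the cm = tm branch, Phi is an idempotent
  have h2 : ∃ z, tmin σ x₀ a₀ j₀ x < z := ⟨m, hm⟩
  have hPhi : Phi U σ x₀ a₀ j₀ x = eI U σ x₀ a₀ j₀ (tmin σ x₀ a₀ j₀ x) := by
    unfold Phi; rw [if_pos hcm, if_pos h2]
  have := (eI_spec hU hJ hσ hval hx₀ hj₀ ha₀ ha₀m h2).1
  rw [hPhi] at h; rw [h] at this; exact this

include hU hJ hσ hval hx₀ hj₀ ha₀ ha₀m in
lemma Phi_inj {x y : α} (h : Phi U σ x₀ a₀ j₀ x = Phi U σ x₀ a₀ j₀ y) :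
    cls σ x₀ a₀ j₀ x y := by
  obtain ⟨hxU, hxR, hxL⟩ := Phi_spec hU hJ hσ hval hx₀ hj₀ ha₀ ha₀m (U := U) x
  obtain ⟨hyU, hyR, hyL⟩ := Phi_spec hU hJ hσ hval hx₀ hj₀ ha₀ ha₀m (U := U) y
  have hte : typeEq σ x₀ a₀ j₀ x y := by
    constructor
    · refine req_trans (req_symm (tmin_te x).1) (req_trans (req_symm hxR) ?_)
      rw [h]; exact req_trans hyR (tmin_te y).1
    · refine leq_trans (leq_symm (tmin_te x).2) (leq_trans (leq_symm hxL) ?_)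
      rw [h]; exact leq_trans hyL (tmin_te y).2
  have htm : tmin σ x₀ a₀ j₀ x = tmin σ x₀ a₀ j₀ y := tmin_congr hte
  have hdone : cmin σ x₀ a₀ j₀ x = cmin σ x₀ a₀ j₀ y → cls σ x₀ a₀ j₀ x y := by
    intro hmm
    refine cls_trans hJ hσ hval hx₀ hj₀ ha₀ (cls_symm (cmin_cls x)) ?_
    rw [hmm]; exact cmin_cls y
  rcases eq_or_ne (cmin σ x₀ a₀ j₀ x) (cmin σ x₀ a₀ j₀ y) with hmm | hmm
  · exact hdone hmm
  exfalso
  -- mixed case helper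
  have mixed : ∀ a b : α, Phi U σ x₀ a₀ j₀ a = Phi U σ x₀ a₀ j₀ b →
      tmin σ x₀ a₀ j₀ a = tmin σ x₀ a₀ j₀ b →
      cmin σ x₀ a₀ j₀ a = tmin σ x₀ a₀ j₀ a → cmin σ x₀ a₀ j₀ b ≠ tmin σ x₀ a₀ j₀ b →
      False := by
    intro a b hab htab hca hcb
    have hrb : tmin σ x₀ a₀ j₀ b < cmin σ x₀ a₀ j₀ b :=
      lt_of_le_of_ne (tmin_le_cmin b) (Ne.symm hcb)
    have hPb : Phi U σ x₀ a₀ j₀ b = σ (tmin σ x₀ a₀ j₀ b) (cmin σ x₀ a₀ j₀ b) := by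
      unfold Phi; rw [if_neg hcb]
    have hPa : Phi U σ x₀ a₀ j₀ a = σ (tmin σ x₀ a₀ j₀ a) (cmin σ x₀ a₀ j₀ b) := by
      rw [hab, hPb, htab]
    have hidem := Phi_idem_of_eq hU hJ hσ hval hx₀ hj₀ ha₀ ha₀m
      (htab ▸ hrb) hPa hca
    have hclsr : cls σ x₀ a₀ j₀ (tmin σ x₀ a₀ j₀ b) (cmin σ x₀ a₀ j₀ b) := by
      refine ⟨?_, Or.inr (Or.inl ⟨hrb, by rw [← htab]; exact hidem⟩)⟩
      exact te_trans (tmin_te b) (te_symm (cls_te (cmin_cls b)))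
    have hle : cmin σ x₀ a₀ j₀ b ≤ tmin σ x₀ a₀ j₀ b :=
      cmin_min (cls_trans hJ hσ hval hx₀ hj₀ ha₀ hclsr (cmin_cls b))
    exact absurd (lt_of_lt_of_le hrb hle) (lt_irrefl _)
  by_cases hmxr : cmin σ x₀ a₀ j₀ x = tmin σ x₀ a₀ j₀ x
  · by_cases hmyr : cmin σ x₀ a₀ j₀ y = tmin σ x₀ a₀ j₀ y
    · exact hmm (by rw [hmxr, hmyr, htm])
    · exact mixed x y h htm hmxr hmyr
  · by_cases hmyr : cmin σ x₀ a₀ j₀ y = tmin σ x₀ a₀ j₀ y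
    · exact mixed y x h.symm htm.symm hmyr hmxr
    · -- both proper
      have both : ∀ a b : α, Phi U σ x₀ a₀ j₀ a = Phi U σ x₀ a₀ j₀ b →
          typeEq σ x₀ a₀ j₀ a b → tmin σ x₀ a₀ j₀ a = tmin σ x₀ a₀ j₀ b →
          cmin σ x₀ a₀ j₀ a ≠ tmin σ x₀ a₀ j₀ a → cmin σ x₀ a₀ j₀ b ≠ tmin σ x₀ a₀ j₀ b →
          cmin σ x₀ a₀ j₀ a < cmin σ x₀ a₀ j₀ b → False := by
        intro a b hab hteab htab hca hcb hlt
        have hra : tmin σ x₀ a₀ j₀ a < cmin σ x₀ a₀ j₀ a :=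
          lt_of_le_of_ne (tmin_le_cmin a) (Ne.symm hca)
        have hPa : Phi U σ x₀ a₀ j₀ a = σ (tmin σ x₀ a₀ j₀ a) (cmin σ x₀ a₀ j₀ a) := by
          unfold Phi; rw [if_neg hca]
        have hPb : Phi U σ x₀ a₀ j₀ b = σ (tmin σ x₀ a₀ j₀ a) (cmin σ x₀ a₀ j₀ b) := by
          unfold Phi; rw [if_neg hcb, ← htab]
        have hσeq : σ (tmin σ x₀ a₀ j₀ a) (cmin σ x₀ a₀ j₀ a)
            = σ (tmin σ x₀ a₀ j₀ a) (cmin σ x₀ a₀ j₀ b) := by rw [← hPa, ← hPb, hab]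
        have hadd : σ (tmin σ x₀ a₀ j₀ a) (cmin σ x₀ a₀ j₀ a) * σ (cmin σ x₀ a₀ j₀ a) (cmin σ x₀ a₀ j₀ b)
            = σ (tmin σ x₀ a₀ j₀ a) (cmin σ x₀ a₀ j₀ b) := hσ _ _ _ hra hlt
        have htra : typeEq σ x₀ a₀ j₀ (tmin σ x₀ a₀ j₀ a) (cmin σ x₀ a₀ j₀ a) :=
          te_trans (tmin_te a) (te_symm (cls_te (cmin_cls a)))
        have htab2 : typeEq σ x₀ a₀ j₀ (cmin σ x₀ a₀ j₀ a) (cmin σ x₀ a₀ j₀ b) :=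
          te_trans (cls_te (cmin_cls a)) (te_trans hteab (te_symm (cls_te (cmin_cls b))))
        have hnm : ∃ z, tmin σ x₀ a₀ j₀ a < z := ⟨_, hra⟩
        obtain ⟨hei, henU, heR, heL⟩ := eI_spec hU hJ hσ hval hx₀ hj₀ ha₀ ha₀m hnm
        have hLle : Lle (eI U σ x₀ a₀ j₀ (tmin σ x₀ a₀ j₀ a)) (σ (tmin σ x₀ a₀ j₀ a) (cmin σ x₀ a₀ j₀ a)) :=
          lle_trans (lle_trans heL.1 htra.2.1) (sigma_leq hJ hσ hval hx₀ ha₀ hra).2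
        obtain ⟨w, hw⟩ := hLle
        have he2 : eI U σ x₀ a₀ j₀ (tmin σ x₀ a₀ j₀ a) * σ (cmin σ x₀ a₀ j₀ a) (cmin σ x₀ a₀ j₀ b)
            = eI U σ x₀ a₀ j₀ (tmin σ x₀ a₀ j₀ a) := by
          have : ((eI U σ x₀ a₀ j₀ (tmin σ x₀ a₀ j₀ a) * σ (cmin σ x₀ a₀ j₀ a) (cmin σ x₀ a₀ j₀ b) : T) : WithOne T)
              = ↑(eI U σ x₀ a₀ j₀ (tmin σ x₀ a₀ j₀ a)) := by
            rw [WithOne.coe_mul, hw, mul_assoc, ← WithOne.coe_mul, hadd, ← hσeq, ← hw]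
          exact_mod_cast this
        have hRle : Rle (σ (cmin σ x₀ a₀ j₀ a) (cmin σ x₀ a₀ j₀ b)) (eI U σ x₀ a₀ j₀ (tmin σ x₀ a₀ j₀ a)) :=
          rle_trans (rle_trans (sigma_req hJ hσ hval hj₀ hlt).1 htra.1.2) heR.2
        have he3 := idem_left_id hei hRle
        have hue : σ (cmin σ x₀ a₀ j₀ a) (cmin σ x₀ a₀ j₀ b) = eI U σ x₀ a₀ j₀ (tmin σ x₀ a₀ j₀ a) := by
          rw [← he3, he2]
        have huid : σ (cmin σ x₀ a₀ j₀ a) (cmin σ x₀ a₀ j₀ b) * σ (cmin σ x₀ a₀ j₀ a) (cmin σ x₀ a₀ j₀ b)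
            = σ (cmin σ x₀ a₀ j₀ a) (cmin σ x₀ a₀ j₀ b) := by rw [hue]; exact hei
        have hclsab : cls σ x₀ a₀ j₀ (cmin σ x₀ a₀ j₀ a) (cmin σ x₀ a₀ j₀ b) :=
          ⟨htab2, Or.inr (Or.inl ⟨hlt, huid⟩)⟩
        have h1 : cmin σ x₀ a₀ j₀ (cmin σ x₀ a₀ j₀ a) = cmin σ x₀ a₀ j₀ a :=
          cmin_congr hJ hσ hval hx₀ hj₀ ha₀ (cmin_cls a)
        have h2 : cmin σ x₀ a₀ j₀ (cmin σ x₀ a₀ j₀ b) = cmin σ x₀ a₀ j₀ b :=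
          cmin_congr hJ hσ hval hx₀ hj₀ ha₀ (cmin_cls b)
        have : cmin σ x₀ a₀ j₀ a = cmin σ x₀ a₀ j₀ b := by
          rw [← h1, ← h2, cmin_congr hJ hσ hval hx₀ hj₀ ha₀ hclsab]
        exact absurd this (ne_of_lt hlt)
      rcases lt_trichotomy (cmin σ x₀ a₀ j₀ x) (cmin σ x₀ a₀ j₀ y) with hlt | heq | hlt
      · exact both x y h hte htm hmxr hmyr hlt
      · exact hmm heq
      · exact both y x h.symm (te_symm hte) htm.symm hmyr hmxr hlt

include hU hJ hσ hval hx₀ hj₀ ha₀ ha₀m in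
theorem core_flat {x y x' y' : α} (hxy : x < y) (hxy' : x' < y')
    (e1 : Phi U σ x₀ a₀ j₀ x = Phi U σ x₀ a₀ j₀ y)
    (e2 : Phi U σ x₀ a₀ j₀ x' = Phi U σ x₀ a₀ j₀ y')
    (e3 : Phi U σ x₀ a₀ j₀ x = Phi U σ x₀ a₀ j₀ x') :
    σ x y = σ x' y' ∧ σ x y * σ x y = σ x y := by
  have c1 := Phi_inj hU hJ hσ hval hx₀ hj₀ ha₀ ha₀m e1
  have c2 := Phi_inj hU hJ hσ hval hx₀ hj₀ ha₀ ha₀m e2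
  have c3 := Phi_inj hU hJ hσ hval hx₀ hj₀ ha₀ ha₀m e3
  have i1 : σ x y * σ x y = σ x y := by
    rcases c1.2 with h | h | h
    · exact absurd h (ne_of_lt hxy)
    · exact h.2
    · exact absurd h.1 (not_lt.mpr (le_of_lt hxy))
  have i2 : σ x' y' * σ x' y' = σ x' y' := by
    rcases c2.2 with h | h | h
    · exact absurd h (ne_of_lt hxy')
    · exact h.2
    · exact absurd h.1 (not_lt.mpr (le_of_lt hxy'))
  have htyy : typeEq σ x₀ a₀ j₀ y y' :=
    te_trans (te_symm c1.1) (te_trans c3.1 c2.1)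
  exact ⟨lemA hJ hσ hval hx₀ hj₀ ha₀ hxy hxy' c3.1.1 htyy.2 i1 i2, i1⟩

end CoreSec

end FSplit
namespace FSplit

open Classical in
theorem core_split
    {T : Type*} [Semigroup T] [Fintype T] {U : Set T}
    {α : Type*} [LinearOrder α] [WellFoundedLT α] {σ : α → α → T}
    (hU : ∀ a ∈ U, ∀ t : T, a * t ∈ U ∧ t * a ∈ U)
    (hJ : ∀ a b : T, a ∉ U → b ∉ U → Jle a b)
    (hJne : ∃ a : T, a ∉ U) (hσ : IsAdditive σ)
    (hval : ∀ x y : α, x < y → σ x y ∉ U)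
    (hctx : ∀ p q : α, (∀ z, p ≤ z) → p < q → ∃ a, a ∉ U ∧ a * σ p q ∉ U) :
    ∃ s : α → ℕ, (∀ x, 1 ≤ s x ∧ s x ≤ Nat.card {a : T // a ∉ U}) ∧
      ∀ x y x' y' : α, x < y → x' < y' → s x = s y → s x' = s y' → s x = s x' →
        σ x y = σ x' y' ∧ σ x y * σ x y = σ x y := by
  classical
  have hcard : 1 ≤ Nat.card {a : T // a ∉ U} := by
    have : Nonempty {a : T // a ∉ U} := ⟨⟨hJne.choose, hJne.choose_spec⟩⟩
    rw [Nat.card_eq_fintype_card]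
    exact Fintype.card_pos
  by_cases hpair : ∃ p q : α, p < q
  · obtain ⟨p, q, hpq⟩ := hpair
    have huniv : (Set.univ : Set α).Nonempty := ⟨p, trivial⟩
    obtain ⟨x₀, hx₀⟩ : ∃ x₀ : α, ∀ z, x₀ ≤ z := by
      refine ⟨(wellFounded_lt).min Set.univ huniv, fun z => ?_⟩
      exact not_lt.mp ((wellFounded_lt).not_lt_min Set.univ (Set.mem_univ z))
    have hxnm : ∃ z, x₀ < z := by
      rcases lt_or_ge x₀ p with h | h
      · exact ⟨p, h⟩
      · exact ⟨q, lt_of_le_of_lt (hx₀ p) hpq⟩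
    obtain ⟨a₀, ha₀, ha₀m⟩ := hctx x₀ (succA x₀) hx₀ (succA_lt hxnm)
    obtain ⟨j₀, hj₀⟩ := hJne
    let en := Fintype.equivFin {a : T // a ∉ U}
    refine ⟨fun x => (en ⟨Phi U σ x₀ a₀ j₀ x,
      (Phi_spec hU hJ hσ hval hx₀ hj₀ ha₀ ha₀m x).1⟩).val + 1, ?_, ?_⟩
    · intro x
      have hlt := (en ⟨Phi U σ x₀ a₀ j₀ x,
        (Phi_spec hU hJ hσ hval hx₀ hj₀ ha₀ ha₀m x).1⟩).isLt
      have hc : Nat.card {a : T // a ∉ U} = Fintype.card {a : T // a ∉ U} :=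
        Nat.card_eq_fintype_card
      exact ⟨Nat.le_add_left 1 _, by rw [hc]; exact Nat.succ_le_of_lt hlt⟩
    · intro x y x' y' hxy hxy' h1 h2 h3
      have key : ∀ u v : α,
          (en ⟨Phi U σ x₀ a₀ j₀ u, (Phi_spec hU hJ hσ hval hx₀ hj₀ ha₀ ha₀m u).1⟩).val + 1 =
          (en ⟨Phi U σ x₀ a₀ j₀ v, (Phi_spec hU hJ hσ hval hx₀ hj₀ ha₀ ha₀m v).1⟩).val + 1 →
          Phi U σ x₀ a₀ j₀ u = Phi U σ x₀ a₀ j₀ v := by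
        intro u v huv
        have h' : (en ⟨Phi U σ x₀ a₀ j₀ u, _⟩) = (en ⟨Phi U σ x₀ a₀ j₀ v, _⟩) :=
          Fin.ext (by omega)
        have := en.injective h'
        exact congrArg Subtype.val this
      exact core_flat hU hJ hσ hval hx₀ hj₀ ha₀ ha₀m hxy hxy'
        (key x y h1) (key x' y' h2) (key x x' h3)
  · refine ⟨fun _ => 1, fun x => ⟨le_refl 1, hcard⟩, ?_⟩
    intro x y x' y' hxy
    exact absurd ⟨x, y, hxy⟩ hpair

end FSplit


namespace FSplit

lemma subtype_val_min {α : Type*} [LinearOrder α] {p : α → Prop} (a b : Subtype p) :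
    (min a b).val = min a.val b.val := by
  rcases le_total a b with h | h
  · rw [min_eq_left h, min_eq_left (Subtype.coe_le_coe.mpr h)]
  · rw [min_eq_right h, min_eq_right (Subtype.coe_le_coe.mpr h)]

lemma subtype_val_max {α : Type*} [LinearOrder α] {p : α → Prop} (a b : Subtype p) :
    (max a b).val = max a.val b.val := by
  rcases le_total a b with h | h
  · rw [max_eq_right h, max_eq_right (Subtype.coe_le_coe.mpr h)]
  · rw [max_eq_left h, max_eq_left (Subtype.coe_le_coe.mpr h)]

lemma exists_max_jclass {T : Type*} [Semigroup T] [Fintype T] [Nonempty T] :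
    ∃ v : T, ∀ w : T, Jle v w → Jle w v := by
  classical
  obtain ⟨v, -, hv⟩ := Finset.exists_max_image Finset.univ
    (fun a => (Finset.univ.filter (fun x => Jle x a)).card)
    ⟨Classical.arbitrary T, Finset.mem_univ _⟩
  refine ⟨v, fun w hvw => ?_⟩
  by_contra hwv
  have hsub : Finset.univ.filter (fun x => Jle x v) ⊂ Finset.univ.filter (fun x => Jle x w) := by
    rw [Finset.ssubset_def]
    constructor
    · intro x hx
      simp only [Finset.mem_filter, Finset.mem_univ, true_and] at hx ⊢
      exact jle_trans hx hvw
    · intro hsup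
      have hw : w ∈ Finset.univ.filter (fun x => Jle x w) := by
        simp only [Finset.mem_filter, Finset.mem_univ, true_and]
        exact jle_refl w
      have := hsup hw
      simp only [Finset.mem_filter, Finset.mem_univ, true_and] at this
      exact hwv this
  have h1 := Finset.card_lt_card hsub
  have h2 := hv w (Finset.mem_univ w)
  omega

theorem main_aux : ∀ (n : ℕ) (T : Type u_1) [Semigroup T] [Fintype T],
    Fintype.card T ≤ n → ∀ (α : Type u_2) [LinearOrder α] [WellFoundedLT α]
    (σ : α → α → T), IsAdditive σ →
    ∃ s : α → ℕ, (∀ x, 1 ≤ s x ∧ s x ≤ Fintype.card T) ∧ IsRamseyanSplit σ s := by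
  intro n
  induction n with
  | zero =>
    intro T _ _ hcard α _ _ σ _
    have hempty : IsEmpty T := Fintype.card_eq_zero_iff.mp (le_antisymm hcard (Nat.zero_le _))
    exact ⟨fun _ => 1, fun x => (hempty.false (σ x x)).elim,
      fun k x _ _ _ _ _ _ => (hempty.false (σ x x)).elim⟩
  | succ n ih =>
    intro T _ _ hcard α _ _ σ hσ
    classical
    rcases isEmpty_or_nonempty α with hα | hα
    · exact ⟨fun _ => 1, fun x => (hα.false x).elim, fun k x _ _ _ _ _ _ => (hα.false x).elim⟩
    have hTne : Nonempty T := ⟨σ (Classical.arbitrary α) (Classical.arbitrary α)⟩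
    obtain ⟨v, hv⟩ := exists_max_jclass (T := T)
    by_cases hsimple : ∀ a : T, Jle v a
    · -- single 𝒥-class: the flat split
      have hU : ∀ a ∈ (∅ : Set T), ∀ t : T, a * t ∈ (∅ : Set T) ∧ t * a ∈ (∅ : Set T) := by
        simp
      have hJ : ∀ a b : T, a ∉ (∅ : Set T) → b ∉ (∅ : Set T) → Jle a b :=
        fun a b _ _ => jle_trans (hv a (hsimple a)) (hsimple b)
      have hJne : ∃ a : T, a ∉ (∅ : Set T) := ⟨v, Set.notMem_empty v⟩
      obtain ⟨s, hs, hflat⟩ := core_split (U := (∅ : Set T)) (σ := σ) hU hJ hJne hσ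
        (fun x y _ => Set.notMem_empty _)
        (fun p q _ hpq => ⟨σ p q, Set.notMem_empty _, Set.notMem_empty _⟩)
      have hcard2 : Nat.card {a : T // a ∉ (∅ : Set T)} = Fintype.card T := by
        rw [Nat.card_eq_fintype_card]
        exact Fintype.card_congr (Equiv.subtypeUnivEquiv fun x => Set.notMem_empty x)
      refine ⟨s, fun x => ⟨(hs x).1, by rw [← hcard2]; exact (hs x).2⟩, ?_⟩
      intro k x y x' y' hxy hxy' hN
      have hkx := (hN x (by simp) x (by simp)).1
      have hky := (hN y (by simp) y (by simp)).1
      have hkx' := (hN x' (by simp) x' (by simp)).1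
      have hky' := (hN y' (by simp) y' (by simp)).1
      exact hflat x y x' y' hxy hxy' (by rw [hkx, hky]) (by rw [hkx', hky'])
        (by rw [hkx, hkx'])
    · -- non-trivial maximal 𝒥-class
      push_neg at hsimple
      obtain ⟨b₀, hb₀⟩ := hsimple
      set U : Set T := {a | ¬ Jle v a} with hUdef
      have hb₀U : b₀ ∈ U := hb₀
      have hvU : v ∉ U := by
        simp only [hUdef, Set.mem_setOf_eq, not_not]
        exact jle_refl v
      have hU : ∀ a ∈ U, ∀ t : T, a * t ∈ U ∧ t * a ∈ U := by
        intro a ha t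
        constructor
        · intro hj
          exact ha (jle_trans hj (jle_of_rle (rle_mul a t)))
        · intro hj
          exact ha (jle_trans hj (jle_of_lle (lle_mul a t)))
      have hJT : ∀ a b : T, a ∉ U → b ∉ U → Jle a b := by
        intro a b ha hb
        simp only [hUdef, Set.mem_setOf_eq, not_not] at ha hb
        exact jle_trans (hv a ha) hb
      -- skeleton
      let inB : α → Prop := WellFounded.fix (wellFounded_lt)
        (fun x IH => ∀ d, ∀ h : d < x, IH d h → σ d x ∈ U)
      have hinB : ∀ x, inB x ↔ ∀ d, d < x → inB d → σ d x ∈ U := by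
        intro x
        have := WellFounded.fix_eq (wellFounded_lt)
          (fun (x : α) (IH : ∀ y, y < x → Prop) => ∀ d, ∀ h : d < x, IH d h → σ d x ∈ U) x
        exact Eq.to_iff this
      have hb2 : ∀ {d d' : α}, d < d' → inB d → inB d' → σ d d' ∈ U := by
        intro d d' h hd hd'
        exact ((hinB d').mp hd') d h hd
      let SC : α → α → Prop := fun x y => ∀ z, min x y ≤ z → z ≤ max x y → ¬ inB z
      have sc_symm : ∀ {x y}, SC x y → SC y x := by
        intro x y h z h1 h2
        exact h z (by rwa [min_comm]) (by rwa [max_comm])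
      have sc_notB : ∀ {x y}, SC x y → ¬ inB y := by
        intro x y h
        exact h y (min_le_right x y) (le_max_right x y)
      have sc_self : ∀ {x}, ¬ inB x → SC x x := by
        intro x hx z h1 h2
        have hz : z = x := le_antisymm (by simpa using h2) (by simpa using h1)
        rwa [hz]
      have sc_trans : ∀ {x y z}, SC x y → SC y z → SC x z := by
        intro x y z h1 h2 w hw1 hw2
        rcases le_total w y with hwy | hwy
        · rcases min_le_iff.mp hw1 with h | h
          · exact h1 w (le_trans (min_le_left x y) h) (le_trans hwy (le_max_right x y))
          · exact h2 w (le_trans (min_le_right y z) h) (le_trans hwy (le_max_left y z))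
        · rcases le_max_iff.mp hw2 with h | h
          · exact h1 w (le_trans (min_le_right x y) hwy) (le_trans h (le_max_left x y))
          · exact h2 w (le_trans (min_le_left y z) hwy) (le_trans h (le_max_right y z))
      let rt : α → α := fun x =>
        if h : ¬ inB x then (wellFounded_lt).min {y | SC x y} ⟨x, sc_self h⟩ else x
      have rt_mem : ∀ {x}, ¬ inB x → SC x (rt x) := by
        intro x h
        show SC x (dite _ _ _)
        rw [dif_pos h]
        exact (wellFounded_lt).min_mem {y | SC x y} ⟨x, sc_self h⟩
      have rt_congr : ∀ {x y}, ¬ inB x → SC x y → rt x = rt y := by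
        intro x y hx hxy
        have hy : ¬ inB y := sc_notB hxy
        have hset : {z | SC x z} = {z | SC y z} := Set.ext fun z =>
          ⟨fun hz => sc_trans (sc_symm hxy) hz, fun hz => sc_trans hxy hz⟩
        show dite _ _ _ = dite _ _ _
        rw [dif_pos hx, dif_pos hy]
        exact wfmin_eq hset _
      -- recursion on the ideal U
      let TU := {a : T // a ∈ U}
      letI : Mul TU := ⟨fun a b => ⟨a.val * b.val, (hU a.val a.2 b.val).1⟩⟩
      letI : Semigroup TU := ⟨fun a b c => Subtype.ext (mul_assoc _ _ _)⟩
      have hcardU : Fintype.card TU ≤ n := by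
        have h1 : Fintype.card TU < Fintype.card T := Fintype.card_subtype_lt (x := v) hvU
        omega
      let B := {x : α // inB x}
      let σU : B → B → TU := fun d d' =>
        if h : σ d.val d'.val ∈ U then ⟨σ d.val d'.val, h⟩ else ⟨b₀, hb₀U⟩
      have σU_eq : ∀ {d d' : B}, d < d' → (σU d d').val = σ d.val d'.val := by
        intro d d' h
        have hm : σ d.val d'.val ∈ U := hb2 h d.2 d'.2
        simp only [σU, dif_pos hm]
      have hσU : IsAdditive σU := by
        intro a b c h1 h2
        apply Subtype.ext
        show (σU a b * σU b c).val = _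
        have hv1 : (σU a b * σU b c).val = (σU a b).val * (σU b c).val := rfl
        rw [hv1, σU_eq h1, σU_eq h2, σU_eq (lt_trans h1 h2)]
        exact hσ a.val b.val c.val h1 h2
      obtain ⟨sU, hsU, hramU⟩ := ih TU hcardU B σU hσU
      -- the per-component core splits
      have comp_core : ∀ r : α, ∃ sC : {y : α // SC r y} → ℕ,
          (∀ x, 1 ≤ sC x ∧ sC x ≤ Nat.card {a : T // a ∉ U}) ∧
          (∀ x y x' y' : {y : α // SC r y}, x < y → x' < y' →
            sC x = sC y → sC x' = sC y' → sC x = sC x' →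
            σ x.val y.val = σ x'.val y'.val ∧ σ x.val y.val * σ x.val y.val = σ x.val y.val) := by
        intro r
        have hkey : ∀ (a b : {y : α // SC r y}), a < b →
            ∃ d : α, d < a.val ∧ inB d ∧ σ d b.val ∉ U := by
          intro a b hab
          have hbval : ¬ inB b.val := sc_notB b.2
          rw [hinB] at hbval
          push_neg at hbval
          obtain ⟨d, hd1, hd2, hd3⟩ := hbval
          refine ⟨d, ?_, hd2, hd3⟩
          have hnot1 : ¬ (min r b.val ≤ d) := by
            intro hc
            exact b.2 d hc (le_trans (le_of_lt hd1) (le_max_right r b.val)) hd2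
          have hdmin : d < min r b.val := not_le.mp hnot1
          by_contra hda
          push_neg at hda
          have hm1 : min r a.val ≤ d := le_trans (min_le_right r a.val) hda
          have hm2 : d ≤ max r a.val :=
            le_trans (le_of_lt (lt_of_lt_of_le hdmin (min_le_left r b.val))) (le_max_left r a.val)
          exact a.2 d hm1 hm2 hd2
        have hvalC : ∀ (a b : {y : α // SC r y}), a < b → σ a.val b.val ∉ U := by
          intro a b hab huab
          obtain ⟨d, hd1, hd2, hd3⟩ := hkey a b hab
          have hadd : σ d a.val * σ a.val b.val = σ d b.val :=
            hσ d a.val b.val hd1 (Subtype.coe_lt_coe.mpr hab)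
          exact hd3 (hadd ▸ (hU _ huab (σ d a.val)).2)
        have hctxC : ∀ p q : {y : α // SC r y}, (∀ z, p ≤ z) → p < q →
            ∃ a, a ∉ U ∧ a * σ p.val q.val ∉ U := by
          intro p q _ hpq
          obtain ⟨d, hd1, hd2, hd3⟩ := hkey p q hpq
          have hadd : σ d p.val * σ p.val q.val = σ d q.val :=
            hσ d p.val q.val hd1 (Subtype.coe_lt_coe.mpr hpq)
          refine ⟨σ d p.val, ?_, by rwa [hadd]⟩
          intro hc
          exact hd3 (hadd ▸ (hU _ hc (σ p.val q.val)).1)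
        exact core_split (σ := fun a b : {y : α // SC r y} => σ a.val b.val) hU hJT ⟨v, hvU⟩
          (fun a b c h1 h2 => hσ a.val b.val c.val (Subtype.coe_lt_coe.mpr h1)
            (Subtype.coe_lt_coe.mpr h2))
          hvalC hctxC
      let sC : ∀ r : α, {y : α // SC r y} → ℕ := fun r => (comp_core r).choose
      have sC_bound : ∀ (r : α) (x : {y : α // SC r y}),
          1 ≤ sC r x ∧ sC r x ≤ Nat.card {a : T // a ∉ U} :=
        fun r => (comp_core r).choose_spec.1
      have sC_flat : ∀ (r : α), ∀ x y x' y' : {y : α // SC r y}, x < y → x' < y' →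
          sC r x = sC r y → sC r x' = sC r y' → sC r x = sC r x' →
          σ x.val y.val = σ x'.val y'.val ∧ σ x.val y.val * σ x.val y.val = σ x.val y.val :=
        fun r => (comp_core r).choose_spec.2
      have sC_transport : ∀ (r r' : α) (hrr : r = r') (a : α) (p : SC r a) (p' : SC r' a),
          sC r ⟨a, p⟩ = sC r' ⟨a, p'⟩ := by
        intro r r' hrr
        subst hrr
        intro a p p'
        rfl
      set o := Fintype.card TU with ho
      have htot : o + Nat.card {a : T // a ∉ U} = Fintype.card T := by
        have h1 := Fintype.card_subtype_compl (fun a : T => a ∈ U)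
        have h2 := Fintype.card_subtype_le (fun a : T => a ∈ U)
        have h3 : Nat.card {a : T // a ∉ U} = Fintype.card {a : T // ¬ a ∈ U} :=
          Nat.card_eq_fintype_card
        have h4 : o = Fintype.card {a : T // a ∈ U} := rfl
        omega
      let s : α → ℕ := fun z =>
        if h : inB z then sU ⟨z, h⟩ else o + sC (rt z) ⟨z, sc_symm (rt_mem h)⟩
      have hsB : ∀ (z : α) (h : inB z), s z = sU ⟨z, h⟩ := fun z h => dif_pos h
      have hsCC : ∀ (z : α) (h : ¬ inB z), s z = o + sC (rt z) ⟨z, sc_symm (rt_mem h)⟩ :=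
        fun z h => dif_neg h
      refine ⟨s, ?_, ?_⟩
      · intro z
        by_cases h : inB z
        · rw [hsB z h]
          refine ⟨(hsU ⟨z, h⟩).1, le_trans (hsU ⟨z, h⟩).2 ?_⟩
          exact le_trans (Fintype.card_subtype_le _) (le_refl _)
        · rw [hsCC z h]
          constructor
          · exact le_trans (sC_bound (rt z) ⟨z, sc_symm (rt_mem h)⟩).1
              (Nat.le_add_left _ o)
          · exact le_trans (Nat.add_le_add_left (sC_bound (rt z) ⟨z, sc_symm (rt_mem h)⟩).2 o)
              (le_of_eq htot)
      · intro k x y x' y' hxy hxy' hN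
        have hmx : x ∈ ({x, y, x', y'} : Set α) := by simp
        have hmy : y ∈ ({x, y, x', y'} : Set α) := by simp
        have hmx' : x' ∈ ({x, y, x', y'} : Set α) := by simp
        have hmy' : y' ∈ ({x, y, x', y'} : Set α) := by simp
        have hk : ∀ a ∈ ({x, y, x', y'} : Set α), s a = k := fun a ha => (hN a ha a ha).1
        have hcov : ∀ a ∈ ({x, y, x', y'} : Set α), ∀ b ∈ ({x, y, x', y'} : Set α),
            ∀ z, min a b ≤ z → z ≤ max a b → k ≤ s z := fun a ha b hb => (hN a ha b hb).2.2
        by_cases hko : k ≤ o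
        · -- skeleton case: all four are in B
          have hall : ∀ a ∈ ({x, y, x', y'} : Set α), inB a := by
            intro a ha
            by_contra hc
            have h1 := hk a ha
            rw [hsCC a hc] at h1
            have h2 := (sC_bound (rt a) ⟨a, sc_symm (rt_mem hc)⟩).1
            omega
          have hx := hall x hmx
          have hy := hall y hmy
          have hx' := hall x' hmx'
          have hy' := hall y' hmy'
          have hqB : ∀ a ∈ ({⟨x, hx⟩, ⟨y, hy⟩, ⟨x', hx'⟩, ⟨y', hy'⟩} : Set B),
              ∀ b ∈ ({⟨x, hx⟩, ⟨y, hy⟩, ⟨x', hx'⟩, ⟨y', hy'⟩} : Set B),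
              KNeighbours sU k a b := by
            intro a ha b hb
            simp only [Set.mem_insert_iff, Set.mem_singleton_iff] at ha hb
            have hav : a.val ∈ ({x, y, x', y'} : Set α) := by
              rcases ha with h | h | h | h <;> subst h <;> simp
            have hbv : b.val ∈ ({x, y, x', y'} : Set α) := by
              rcases hb with h | h | h | h <;> subst h <;> simp
            refine ⟨?_, ?_, ?_⟩
            · have h1 := hk a.val hav
              rw [hsB a.val a.2] at h1
              exact h1
            · have h1 := hk b.val hbv
              rw [hsB b.val b.2] at h1
              exact h1
            · intro z hz1 hz2
              have hz1' : min a.val b.val ≤ z.val := by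
                rw [← subtype_val_min]; exact Subtype.coe_le_coe.mpr hz1
              have hz2' : z.val ≤ max a.val b.val := by
                rw [← subtype_val_max]; exact Subtype.coe_le_coe.mpr hz2
              have hzz := hcov a.val hav b.val hbv z.val hz1' hz2'
              rw [hsB z.val z.2] at hzz
              exact hzz
          have hmain := hramU k ⟨x, hx⟩ ⟨y, hy⟩ ⟨x', hx'⟩ ⟨y', hy'⟩
            (Subtype.mk_lt_mk.mpr hxy) (Subtype.mk_lt_mk.mpr hxy') hqB
          constructor
          · have h1 := congrArg Subtype.val hmain.1
            rwa [σU_eq (Subtype.mk_lt_mk.mpr hxy), σU_eq (Subtype.mk_lt_mk.mpr hxy')] at h1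
          · have h2 := congrArg Subtype.val hmain.2
            have h3 : (σU ⟨x, hx⟩ ⟨y, hy⟩ * σU ⟨x, hx⟩ ⟨y, hy⟩).val
                = (σU ⟨x, hx⟩ ⟨y, hy⟩).val * (σU ⟨x, hx⟩ ⟨y, hy⟩).val := rfl
            rw [h3, σU_eq (Subtype.mk_lt_mk.mpr hxy)] at h2
            exact h2
        · -- component case: all four avoid B
          push_neg at hko
          have hall : ∀ a ∈ ({x, y, x', y'} : Set α), ¬ inB a := by
            intro a ha hc
            have h1 := hk a ha
            rw [hsB a hc] at h1
            have h2 := (hsU ⟨a, hc⟩).2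
            omega
          have hx := hall x hmx
          have hy := hall y hmy
          have hx' := hall x' hmx'
          have hy' := hall y' hmy'
          have hsc : ∀ a ∈ ({x, y, x', y'} : Set α), ∀ b ∈ ({x, y, x', y'} : Set α),
              SC a b := by
            intro a ha b hb z hz1 hz2 hzB
            have := hcov a ha b hb z hz1 hz2
            rw [hsB z hzB] at this
            have h2 := (hsU ⟨z, hzB⟩).2
            omega
          -- common root
          set r := rt x with hrdef
          have hmem : ∀ a ∈ ({x, y, x', y'} : Set α), SC r a := by
            intro a ha
            exact sc_trans (sc_symm (rt_mem hx)) (hsc x hmx a ha)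
          have hrta : ∀ a ∈ ({x, y, x', y'} : Set α), rt a = r :=
            fun a ha => (rt_congr hx (hsc x hmx a ha)).symm
          have hseq : ∀ a ∈ ({x, y, x', y'} : Set α), ∀ (h : ¬ inB a) (p : SC r a),
              s a = o + sC r ⟨a, p⟩ := by
            intro a ha h p
            rw [hsCC a h]
            congr 1
            exact sC_transport (rt a) r (hrta a ha) a (sc_symm (rt_mem h)) p
          have e1 : sC r ⟨x, hmem x hmx⟩ = sC r ⟨y, hmem y hmy⟩ := by
            have h1 := hk x hmx
            have h2 := hk y hmy
            rw [hseq x hmx hx (hmem x hmx)] at h1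
            rw [hseq y hmy hy (hmem y hmy)] at h2
            omega
          have e2 : sC r ⟨x', hmem x' hmx'⟩ = sC r ⟨y', hmem y' hmy'⟩ := by
            have h1 := hk x' hmx'
            have h2 := hk y' hmy'
            rw [hseq x' hmx' hx' (hmem x' hmx')] at h1
            rw [hseq y' hmy' hy' (hmem y' hmy')] at h2
            omega
          have e3 : sC r ⟨x, hmem x hmx⟩ = sC r ⟨x', hmem x' hmx'⟩ := by
            have h1 := hk x hmx
            have h2 := hk x' hmx'
            rw [hseq x hmx hx (hmem x hmx)] at h1
            rw [hseq x' hmx' hx' (hmem x' hmx')] at h2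
            omega
          exact sC_flat r ⟨x, hmem x hmx⟩ ⟨y, hmem y hmy⟩ ⟨x', hmem x' hmx'⟩ ⟨y', hmem y' hmy'⟩
            (Subtype.mk_lt_mk.mpr hxy) (Subtype.mk_lt_mk.mpr hxy') e1 e2 e3


end FSplit

theorem factorisation_split_ordinal {α S : Type*} [LinearOrder α] [WellFoundedLT α]
    [Semigroup S] [Fintype S] (σ : α → α → S) (hσ : IsAdditive σ) :
    ∃ s : α → ℕ, (∀ x, 1 ≤ s x ∧ s x ≤ Fintype.card S) ∧ IsRamseyanSplit σ s :=
  FSplit.main_aux (Fintype.card S) S (le_refl _) α σ hσ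
end

section
/- Let α be a complete linear ordering and R an upward closed binary relation on α (meaning x ≤ x' < y' ≤ y and R(x',y') imply R(x,y)). Then there exists a subset γ ⊆ α such that for every x < y in α: (1) if R(x,y) then [x,y] ∩ γ is nonempty, and (2) if the open interval ]x,y[ contains two distinct elements of γ, then R(x,y). -/
/-!
For finitely many `R`-intervals the greedy stabbing works: hit the interval with the smallest
right endpoint at that endpoint `z`, discard the intervals it hits and recurse. Every later point
`z'` is the right endpoint of an `R`-interval lying above `z`, so by upward closure `R` holds on
every interval around `[z, z']`. That condition is closed, so compactness of the product of the
closed intervals (Tychonoff, the intervals being compact as `α` is complete) passes from finite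
to arbitrary families of `R`-intervals.
-/

open Set

section

variable {α : Type*} [LinearOrder α]

def UpwardClosed (R : α → α → Prop) : Prop :=
  ∀ x x' y' y : α, x ≤ x' → x' < y' → y' ≤ y → R x' y' → R x y

def Enclosing (R : α → α → Prop) (u v : α) : Prop :=
  ∀ a b : α, a < u → v < b → R a b

def IsTransversal (E : α → α → Prop) (D : Set (α × α)) (γ : Set α) : Prop :=
  (∀ p ∈ D, (γ ∩ Icc p.1 p.2).Nonempty) ∧ ∀ z ∈ γ, ∀ z' ∈ γ, z < z' → E z z'

theorem UpwardClosed.enclosing {R : α → α → Prop} (hR : UpwardClosed R) {x y u v : α}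
    (hxy : x < y) (hRxy : R x y) (hu : u ≤ x) (hv : y ≤ v) : Enclosing R u v :=
  fun _ _ ha hb => hR _ x y _ (ha.trans_le hu).le hxy (hv.trans hb.le) hRxy

theorem UpwardClosed.exists_isTransversal_finset {R : α → α → Prop} (hR : UpwardClosed R)
    (F : Finset (α × α)) (hF : ∀ p ∈ F, p.1 < p.2 ∧ R p.1 p.2) :
    ∃ S ⊆ Prod.snd '' (F : Set (α × α)), IsTransversal (Enclosing R) F S := by
  induction F using Finset.strongInduction with
  | H F ih =>
  rcases F.eq_empty_or_nonempty with rfl | hne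
  · exact ⟨∅, empty_subset _, by simp, by simp⟩
  obtain ⟨p, hp, hmin⟩ := F.exists_min_image Prod.snd hne
  set F' := F.filter fun q => p.2 < q.1
  have hF' : F' ⊂ F := Finset.filter_ssubset.2 ⟨p, hp, (hF p hp).1.le.not_gt⟩
  obtain ⟨S, hS, hmeet, hchain⟩ := ih F' hF' fun q hq => hF q (Finset.mem_filter.1 hq).1
  have habove : ∀ z ∈ S, p.2 < z ∧ Enclosing R p.2 z := by
    intro z hz
    obtain ⟨q, hq, rfl⟩ := hS hz
    obtain ⟨hqF, hpq⟩ := Finset.mem_filter.1 hq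
    exact ⟨hpq.trans (hF q hqF).1, hR.enclosing (hF q hqF).1 (hF q hqF).2 hpq.le le_rfl⟩
  refine ⟨insert p.2 S, ?_, fun q hq => ?_, ?_⟩
  · rintro z (rfl | hz)
    · exact ⟨p, hp, rfl⟩
    · obtain ⟨q, hq, rfl⟩ := hS hz
      exact ⟨q, (Finset.mem_filter.1 hq).1, rfl⟩
  · by_cases hpq : p.2 < q.1
    · exact (hmeet q (Finset.mem_filter.2 ⟨hq, hpq⟩)).mono (inter_subset_inter_left _ <|
        subset_insert _ _)
    · exact ⟨p.2, mem_insert _ _, not_lt.1 hpq, hmin q hq⟩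
  · rintro z (rfl | hz) z' (rfl | hz') hlt
    · exact absurd hlt (lt_irrefl _)
    · exact (habove z' hz').2
    · exact absurd hlt (habove z hz).1.not_gt
    · exact hchain z hz z' hz' hlt

section Compactness

variable [TopologicalSpace α] [OrderClosedTopology α]

theorem isClosed_enclosing (R : α → α → Prop) : IsClosed {p : α × α | Enclosing R p.1 p.2} := by
  have : {p : α × α | Enclosing R p.1 p.2}ᶜ = ⋃ (a) (b) (_ : ¬ R a b), Ioi a ×ˢ Iio b := by
    ext p
    simp [Enclosing, and_comm]
  rw [← isOpen_compl_iff, this]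
  exact isOpen_iUnion fun a => isOpen_iUnion fun b => isOpen_iUnion fun _ =>
    isOpen_Ioi.prod isOpen_Iio

theorem isClosed_setOf_lt_imp {X : Type*} [TopologicalSpace X] {E : α → α → Prop}
    (hE : IsClosed {p : α × α | E p.1 p.2}) {f g : X → α} (hf : Continuous f)
    (hg : Continuous g) : IsClosed {x | f x < g x → E (f x) (g x)} := by
  have : {x | f x < g x → E (f x) (g x)} =
      {x | g x ≤ f x} ∪ (fun x => (f x, g x)) ⁻¹' {p | E p.1 p.2} := by
    ext x
    simp [imp_iff_not_or]
  rw [this]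
  exact (isClosed_le hg hf).union (hE.preimage (hf.prodMk hg))

theorem exists_isTransversal_of_forall_finset [CompactIccSpace α] {E : α → α → Prop}
    (hE : IsClosed {p : α × α | E p.1 p.2}) (D : Set (α × α))
    (hfin : ∀ F : Finset (α × α), ↑F ⊆ D → ∃ S, IsTransversal E F S) :
    ∃ γ, IsTransversal E D γ := by
  have hIcc (d : D) : (Icc d.1.1 d.1.2).Nonempty := by
    obtain ⟨S, hS, -⟩ := hfin {d.1} (by simp)
    exact (hS d.1 (Finset.mem_singleton_self _)).mono inter_subset_right
  let K (i : D × D) : Set (D → α) := {φ | φ i.1 < φ i.2 → E (φ i.1) (φ i.2)}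
  have hK (i : D × D) : IsClosed (K i) :=
    isClosed_setOf_lt_imp hE (continuous_apply _) (continuous_apply _)
  obtain ⟨φ, hφ, hφK⟩ := (isCompact_univ_pi fun d : D => isCompact_Icc).inter_iInter_nonempty
    K hK fun u => by
      let F := u.image (fun i => i.1.1) ∪ u.image (fun i => i.2.1)
      obtain ⟨S, hS, hchain⟩ := hfin F fun p hp => by
        rcases Finset.mem_union.1 hp with h | h <;>
        · obtain ⟨i, -, rfl⟩ := Finset.mem_image.1 h
          exact Subtype.prop _
      let φ (d : D) : α := if h : d.1 ∈ F then (hS d.1 h).some else (hIcc d).some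
      have hφS (d : D) (hd : d.1 ∈ F) : φ d ∈ S := by
        simpa only [φ, dif_pos hd] using (hS d.1 hd).some_mem.1
      refine ⟨φ, fun d _ => ?_, mem_iInter₂.2 fun i hi => ?_⟩
      · by_cases hd : d.1 ∈ F
        · simpa only [φ, dif_pos hd] using (hS d.1 hd).some_mem.2
        · simpa only [φ, dif_neg hd] using (hIcc d).some_mem
      · exact hchain _ (hφS i.1 (Finset.mem_union_left _ (Finset.mem_image_of_mem _ hi))) _
          (hφS i.2 (Finset.mem_union_right _ (Finset.mem_image_of_mem _ hi)))
  refine ⟨range φ, fun p hp => ⟨φ ⟨p, hp⟩, mem_range_self _, hφ ⟨p, hp⟩ (mem_univ _)⟩, ?_⟩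
  rintro _ ⟨d, rfl⟩ _ ⟨e, rfl⟩ hlt
  exact mem_iInter.1 hφK (d, e) hlt

end Compactness

theorem compactIccSpace_of_isLUB_of_isGLB [TopologicalSpace α] [OrderTopology α]
    (hSup : ∀ t : Set α, t.Nonempty → BddAbove t → ∃ l, IsLUB t l)
    (hInf : ∀ t : Set α, t.Nonempty → BddBelow t → ∃ l, IsGLB t l) : CompactIccSpace α := by
  classical
  rcases isEmpty_or_nonempty α with hα | hα
  · exact ⟨fun {a} => isEmptyElim a⟩
  let _ : ConditionallyCompleteLinearOrder α :=
    { ‹LinearOrder α›, LinearOrder.toLattice with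
      sSup := fun s => if h : s.Nonempty ∧ BddAbove s then (hSup s h.1 h.2).choose
        else Classical.arbitrary α
      sInf := fun s => if h : s.Nonempty ∧ BddBelow s then (hInf s h.1 h.2).choose
        else Classical.arbitrary α
      isLUB_csSup := fun s hne hb => by
        simpa only [dif_pos (And.intro hne hb)] using (hSup s hne hb).choose_spec
      isGLB_csInf := fun s hne hb => by
        simpa only [dif_pos (And.intro hne hb)] using (hInf s hne hb).choose_spec
      csSup_of_not_bddAbove := fun s hs => by simp [hs]
      csInf_of_not_bddBelow := fun s hs => by simp [hs] }
  infer_instance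

end

theorem upward_closed_selection {α : Type*} [LinearOrder α]
    (hSup : ∀ t : Set α, t.Nonempty → BddAbove t → ∃ l, IsLUB t l)
    (hInf : ∀ t : Set α, t.Nonempty → BddBelow t → ∃ l, IsGLB t l)
    (R : α → α → Prop)
    (hup : ∀ x x' y' y : α, x ≤ x' → x' < y' → y' ≤ y → R x' y' → R x y) :
    ∃ γ : Set α, ∀ x y : α, x < y →
      (R x y → ∃ z ∈ γ, x ≤ z ∧ z ≤ y) ∧
      ((∃ z ∈ γ, ∃ z' ∈ γ, x < z ∧ z < y ∧ x < z' ∧ z' < y ∧ z ≠ z') → R x y) := by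
  let _ : TopologicalSpace α := Preorder.topology α
  have _ : OrderTopology α := ⟨rfl⟩
  have := compactIccSpace_of_isLUB_of_isGLB hSup hInf
  obtain ⟨γ, hmeet, hchain⟩ := exists_isTransversal_of_forall_finset (isClosed_enclosing R)
    {p | p.1 < p.2 ∧ R p.1 p.2} fun F hF =>
      (UpwardClosed.exists_isTransversal_finset hup F hF).imp fun _ => And.right
  refine ⟨γ, fun x y hxy => ⟨fun hR => ?_, ?_⟩⟩
  · obtain ⟨z, hz, hxz, hzy⟩ := hmeet (x, y) ⟨hxy, hR⟩
    exact ⟨z, hz, hxz, hzy⟩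
  · rintro ⟨z, hz, z', hz', hxz, hzy, hxz', hz'y, hne⟩
    rcases hne.lt_or_gt with hlt | hlt
    · exact hchain z hz z' hz' hlt x y hxz hz'y
    · exact hchain z' hz' z hz hlt x y hxz' hzy
end

section
/- For every linear ordering α and every natural number k ≥ 1, there exists a map c : α → {0,…,k−1} such that for all x < y in α with c(x) = c(y), the image c([x,y]) equals all of {0,…,k−1}. -/
/-!
Identify `x` and `y` when `[x, y]` is finite. Each class is order-isomorphic to an interval of
`ℤ`, and is coloured periodically: its representative `r` gets some colour `g r`, and `z` gets
`g r` plus the signed number of steps from `r` to `z`, modulo `k`. Two points of one class with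
the same colour are then at least `k` steps apart, so every colour lies between them, and an
infinite class contains `k` consecutive points on one side of any of its points.

If `x < y` lie in different classes and neither class reaches towards the other with infinitely
many points, then between the last point `m` of the class of `x` and the first point `m'` of the
class of `y` there is either an infinite class (done as above) or only finite classes, whose
representatives then form a dense order. So it remains to colour any linear order with `ℕ` so
that every dense interval sees every colour. Take a maximal disjoint family of homogeneous
intervals, all of whose subintervals have one and the same cardinality `κ`: inside each, the `κ`
requirements "colour `n` somewhere in `(a, b)`" can be met at distinct points by a transfinite
greedy choice, and by maximality every dense interval meets one of them in a subinterval.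
-/

open Set Cardinal Function

universe u

theorem Cardinal.exists_injective_forall_mem {X ι : Type u} (S : ι → Set X)
    (h : ∀ i, #ι ≤ #(S i)) : ∃ f : ι → X, Injective f ∧ ∀ i, f i ∈ S i := by
  obtain ⟨e⟩ : Nonempty ((#ι).ord.ToType ≃ ι) := Cardinal.eq.1 (mk_ord_toType _)
  -- before stage `j` of the initial well-order, fewer than `#ι` points have been chosen
  have avoid : ∀ j (g : Iio j → X), (S (e j) \ range g).Nonempty := fun j _ => by
    refine sdiff_nonempty_of_mk_lt_mk (mk_range_le.trans_lt (lt_of_lt_of_le ?_ (h _)))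
    simpa using mk_Iio_lt j
  let F : (#ι).ord.ToType → X :=
    WellFoundedLT.fix fun j ih => (avoid j fun k => ih k k.2).some
  have hF : ∀ j, F j ∈ S (e j) \ range fun k : Iio j => F k := fun j => by
    rw [show F j = _ from WellFoundedLT.fix_eq _ j]
    exact (avoid j _).some_mem
  have hinj : Injective F := .of_lt_imp_ne fun j j' hlt heq => (hF j').2 ⟨⟨j, hlt⟩, heq⟩
  exact ⟨F ∘ e.symm, hinj.comp e.symm.injective, fun i => by simpa using (hF (e.symm i)).1⟩

namespace RainbowColouring

section Dense

variable {β : Type u} [LinearOrder β]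

def DenseIcc (p q : β) : Prop :=
  ∀ ⦃a b⦄, p ≤ a → a < b → b ≤ q → (Ioo a b).Nonempty

lemma DenseIcc.mono {p q u v : β} (h : DenseIcc p q) (hu : p ≤ u) (hv : v ≤ q) :
    DenseIcc u v :=
  fun _ _ ha hab hb => h (hu.trans ha) hab (hb.trans hv)

lemma DenseIcc.infinite_Ioo {p q : β} (h : DenseIcc p q) (hpq : p < q) : (Ioo p q).Infinite := by
  intro hfin
  obtain ⟨m, hm, hmax⟩ := hfin.exists_maximal (h le_rfl hpq le_rfl)
  obtain ⟨z, hmz, hzq⟩ := h hm.1.le hm.2 le_rfl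
  exact hmz.not_ge (hmax ⟨hm.1.trans hmz, hzq⟩ hmz.le)

def IsHomogeneous (p q : β) : Prop :=
  p < q ∧ DenseIcc p q ∧
    ∀ ⦃u v⦄, p ≤ u → u < v → v ≤ q → #(Ioo p q) ≤ #(Ioo u v)

lemma exists_isHomogeneous {p q : β} (hpq : p < q) (h : DenseIcc p q) :
    ∃ u v, p ≤ u ∧ v ≤ q ∧ IsHomogeneous u v := by
  obtain ⟨⟨u, v⟩, ⟨hpu, huv, hvq⟩, hmin⟩ := exists_minimalFor_of_wellFoundedLT
    (fun C : β × β => p ≤ C.1 ∧ C.1 < C.2 ∧ C.2 ≤ q) (fun C => #(Ioo C.1 C.2))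
    ⟨(p, q), le_rfl, hpq, le_rfl⟩
  refine ⟨u, v, hpu, hvq, huv, h.mono hpu hvq, fun u' v' hu' huv' hv' => ?_⟩
  exact hmin (j := (u', v')) ⟨hpu.trans hu', huv', hv'.trans hvq⟩
    (mk_le_mk_of_subset (Ioo_subset_Ioo hu' hv'))

/-- `(a, b, n)` asks for colour `n` inside `Ioo a b`. -/
abbrev Requirement (u v : β) : Type u :=
  {r : β × β × ℕ // u < r.1 ∧ r.1 < r.2.1 ∧ r.2.1 < v}

lemma IsHomogeneous.exists_injective {u v : β} (h : IsHomogeneous u v) :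
    ∃ f : Requirement u v → β, Injective f ∧ ∀ r, f r ∈ Ioo r.1.1 r.1.2.1 := by
  apply exists_injective_forall_mem
  rintro ⟨⟨a, b, n⟩, hua, hab, hbv⟩
  have hinf : ℵ₀ ≤ #(Ioo u v) := infinite_iff.1 (h.2.1.infinite_Ioo h.1).to_subtype
  let e : Requirement u v → Ioo u v × Ioo u v × ℕ := fun r =>
    (⟨r.1.1, r.2.1, r.2.2.1.trans r.2.2.2⟩, ⟨r.1.2.1, r.2.1.trans r.2.2.1, r.2.2.2⟩,
      r.1.2.2)
  have he : Injective e := fun r r' hrr' => by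
    simp only [e, Prod.mk.injEq, Subtype.ext_iff] at hrr'
    exact Subtype.ext (Prod.ext hrr'.1 (Prod.ext hrr'.2.1 hrr'.2.2))
  calc #(Requirement u v) ≤ #(Ioo u v × Ioo u v × ℕ) := mk_le_of_injective he
    _ = #(Ioo u v) := by
      simp [mul_eq_left hinf hinf aleph0_ne_zero, mul_eq_self hinf]
    _ ≤ #(Ioo a b) := h.2.2 hua.le hab hbv.le

lemma exists_pairwiseDisjoint_isHomogeneous : ∃ M : Set (β × β),
    (∀ C ∈ M, IsHomogeneous C.1 C.2) ∧ M.PairwiseDisjoint (fun C => Ioo C.1 C.2) ∧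
      ∀ ⦃p q⦄, p < q → DenseIcc p q →
        ∃ C ∈ M, (Ioo C.1 C.2 ∩ Ioo p q).Nonempty := by
  obtain ⟨M, ⟨hhom, hdisj⟩, hmax⟩ := zorn_subset
    {M : Set (β × β) | (∀ C ∈ M, IsHomogeneous C.1 C.2) ∧
      M.PairwiseDisjoint (fun C => Ioo C.1 C.2)} fun c hc hchain =>
    ⟨⋃₀ c, ⟨fun C ⟨M, hM, hCM⟩ => (hc hM).1 C hCM,
      (pairwise_sUnion hchain.directedOn).2 fun M hM => (hc hM).2⟩,
      fun _ => subset_sUnion_of_mem⟩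
  refine ⟨M, hhom, hdisj, fun p q hpq h => ?_⟩
  by_contra! hM
  obtain ⟨u, v, hpu, hvq, huv⟩ := exists_isHomogeneous hpq h
  have hdisj' : ∀ C ∈ M, Disjoint (Ioo u v) (Ioo C.1 C.2) := fun C hC =>
    (disjoint_iff_inter_eq_empty.2 (hM C hC)).symm.mono_left (Ioo_subset_Ioo hpu hvq)
  have hmem : (u, v) ∈ M :=
    hmax ⟨forall_mem_insert.2 ⟨huv, hhom⟩, hdisj.insert fun C hC _ => hdisj' C hC⟩
      (subset_insert _ _) (mem_insert _ _)
  obtain ⟨w, hw⟩ := huv.2.1 le_rfl huv.1 le_rfl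
  exact disjoint_left.1 (hdisj' _ hmem) hw hw

theorem exists_rainbow_of_denseIcc : ∃ g : β → ℕ,
    ∀ ⦃p q⦄, p < q → DenseIcc p q → ∀ n, ∃ z ∈ Ioo p q, g z = n := by
  obtain ⟨M, hhom, hdisj, hmeet⟩ := exists_pairwiseDisjoint_isHomogeneous (β := β)
  choose pick hinj hpick using fun C : M => (hhom C C.2).exists_injective
  let P : (Σ C : M, Requirement C.1.1 C.1.2) → β := fun x => pick x.1 x.2
  have hP : Injective P := by
    rintro ⟨C, r⟩ ⟨C', r'⟩ h
    have hC : P ⟨C, r⟩ ∈ Ioo C.1.1 C.1.2 := Ioo_subset_Ioo r.2.1.le r.2.2.2.le (hpick C r)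
    have hC' : P ⟨C', r'⟩ ∈ Ioo C'.1.1 C'.1.2 :=
      Ioo_subset_Ioo r'.2.1.le r'.2.2.2.le (hpick C' r')
    obtain rfl : C = C' := Subtype.ext <| by_contra fun hne =>
      disjoint_left.1 (hdisj C.2 C'.2 hne) hC (h ▸ hC')
    rw [hinj C (a₁ := r) (a₂ := r') h]
  refine ⟨extend P (fun x => x.2.1.2.2) 0, fun p q hpq h n => ?_⟩
  obtain ⟨C, hC, w, ⟨hCw, hwC⟩, hpw, hwq⟩ := hmeet hpq h
  obtain ⟨a, ha, haw⟩ := h (le_max_right C.1 p) (max_lt hCw hpw) hwq.le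
  obtain ⟨b, hwb, hb⟩ := h hpw.le (lt_min hwC hwq) (min_le_right C.2 q)
  let r : Requirement C.1 C.2 :=
    ⟨(a, b, n), (le_max_left _ _).trans_lt ha, haw.trans hwb, hb.trans_le (min_le_left _ _)⟩
  have hz := hpick ⟨C, hC⟩ r
  refine ⟨P ⟨⟨C, hC⟩, r⟩, ⟨?_, ?_⟩, hP.extend_apply _ _ _⟩
  · exact (le_max_right C.1 p).trans_lt (ha.trans hz.1)
  · exact (hz.2.trans hb).trans_le (min_le_right _ _)

end Dense

section Intervals

variable {α : Type*} [LinearOrder α]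

lemma ncard_Ico_add {a b c : α} (hab : a ≤ b) (hbc : b ≤ c) (h : (Ico a c).Finite) :
    (Ico a c).ncard = (Ico a b).ncard + (Ico b c).ncard := by
  rw [← Ico_union_Ico_eq_Ico hab hbc] at h ⊢
  exact ncard_union_eq Ico_disjoint_Ico_same (h.subset subset_union_left)
    (h.subset subset_union_right)

lemma exists_ncard_Ico_eq {a b : α} (hab : a ≤ b) (h : (Ico a b).Finite) :
    ∀ j ≤ (Ico a b).ncard, ∃ w ∈ Icc a b, (Ico a w).ncard = j := by
  intro j hj
  induction j with
  | zero => exact ⟨a, ⟨le_rfl, hab⟩, by simp⟩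
  | succ j ih =>
    obtain ⟨w, hw, rfl⟩ := ih (by omega)
    have hwb : w < b := hw.2.lt_of_ne (by rintro rfl; omega)
    obtain ⟨w', ⟨hww', hw'b⟩, hmin⟩ := ((h.insert b).subset
      (Ioc_subset_Icc_self.trans (Icc_subset_Icc_left hw.1) |>.trans (Ico_insert_right hab).ge)
      ).exists_minimal ⟨b, hwb, le_rfl⟩
    have hIco : Ico a w' = insert w (Ico a w) := by
      ext z
      simp only [mem_Ico, mem_insert_iff]
      constructor
      · rintro ⟨haz, hzw'⟩
        rcases lt_trichotomy z w with hzw | rfl | hwz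
        · exact .inr ⟨haz, hzw⟩
        · exact .inl rfl
        · exact (hzw'.not_ge (hmin ⟨hwz, hzw'.le.trans hw'b⟩ hzw'.le)).elim
      · rintro (rfl | ⟨haz, hzw⟩)
        · exact ⟨hw.1, hww'⟩
        · exact ⟨haz, hzw.trans hww'⟩
    refine ⟨w', ⟨hw.1.trans hww'.le, hw'b⟩, ?_⟩
    rw [hIco, ncard_insert_of_notMem (fun hw' => hw'.2.false)
      (h.subset (Ico_subset_Ico_right hw.2))]

end Intervals

section Condensation

variable {α : Type*} [LinearOrder α]

variable (α) in
/-- The finite condensation of a linear order. -/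
def finCond : Setoid α where
  r x y := (uIcc x y).Finite
  iseqv :=
    ⟨fun x => by simp, fun h => by rwa [uIcc_comm],
      fun h₁ h₂ => (h₁.union h₂).subset uIcc_subset_uIcc_union_uIcc⟩

def block (x : α) : Set α := {y | finCond α x y}

lemma mem_block_self (x : α) : x ∈ block x := (finCond α).refl x

lemma ordConnected_block (x : α) : (block x).OrdConnected :=
  ⟨fun _ hy _ hz _ hw => (finCond α).trans hy <|
    (((finCond α).trans ((finCond α).symm hy) hz).subset
      (uIcc_subset_uIcc_left (Icc_subset_uIcc hw)))⟩

lemma Icc_finite_of_mem_block {x a b : α} (ha : a ∈ block x) (hb : b ∈ block x) :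
    (Icc a b).Finite :=
  ((finCond α).trans ((finCond α).symm ha) hb).subset Icc_subset_uIcc

noncomputable def rep (x : α) : α := (Quotient.mk (finCond α) x).out

lemma rep_mem_block (x : α) : rep x ∈ block x := (finCond α).symm (Quotient.mk_out x)

lemma rep_eq_rep {x y : α} : rep x = rep y ↔ finCond α x y := by
  rw [rep, rep, (Quotient.out_injective).eq_iff, Quotient.eq]

lemma rep_rep (x : α) : rep (rep x) = rep x := rep_eq_rep.2 ((finCond α).symm (rep_mem_block x))

lemma Ioo_nonempty_of_not_finCond {a b : α} (hab : a ≤ b) (h : ¬ finCond α a b) :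
    (Ioo a b).Nonempty := by
  by_contra! hempty
  refine h ((toFinite {a, b}).subset ?_)
  rw [uIcc_of_le hab, ← sdiff_eq_empty, Icc_sdiff_both, hempty]

lemma block_inter_Ici_subset_Icc {x y : α} (hxy : x ≤ y) (h : ¬ finCond α x y) :
    block x ∩ Ici x ⊆ Icc x y := fun _ ⟨hz, hxz⟩ => ⟨hxz, not_lt.1 fun hyz =>
  h ((ordConnected_block x).out (mem_block_self x) hz ⟨hxy, hyz.le⟩)⟩

lemma block_inter_Iic_subset_Icc {x y : α} (hxy : x ≤ y) (h : ¬ finCond α x y) :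
    block y ∩ Iic y ⊆ Icc x y := fun _ ⟨hz, hzy⟩ => ⟨not_lt.1 fun hzx =>
  h ((finCond α).symm ((ordConnected_block y).out hz (mem_block_self y) ⟨hzx.le, hxy⟩)), hzy⟩

lemma exists_isGreatest_block {x : α} (h : (block x ∩ Ici x).Finite) :
    ∃ m, IsGreatest (block x) m := by
  obtain ⟨m, ⟨hm, hxm⟩, hmax⟩ := h.exists_maximal ⟨x, mem_block_self x, le_rfl⟩
  refine ⟨m, hm, fun z hz => ?_⟩
  rcases le_total z x with hzx | hxz
  · exact hzx.trans hxm
  · exact not_lt.1 fun hmz => hmz.not_ge (hmax ⟨hz, hxz⟩ hmz.le)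

lemma exists_isLeast_block {x : α} (h : (block x ∩ Iic x).Finite) :
    ∃ m, IsLeast (block x) m := by
  obtain ⟨m, ⟨hm, hmx⟩, hmin⟩ := h.exists_minimal ⟨x, mem_block_self x, le_rfl⟩
  refine ⟨m, hm, fun z hz => ?_⟩
  rcases le_total x z with hxz | hzx
  · exact hmx.trans hxz
  · exact not_lt.1 fun hzm => hzm.not_ge (hmin ⟨hz, hzx⟩ hzm.le)

lemma block_subset_Ioo {a b m m' z : α} (hm : IsGreatest (block a) m)
    (hm' : IsLeast (block b) m') (hz : z ∈ Ioo m m') : block z ⊆ Ioo m m' := by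
  intro w hw
  constructor
  · refine lt_of_not_ge fun hwm => hz.1.not_ge (hm.2 ?_)
    have hmz : m ∈ block z := (ordConnected_block z).out hw (mem_block_self z) ⟨hwm, hz.1.le⟩
    exact (finCond α).trans hm.1 ((finCond α).symm hmz)
  · refine lt_of_not_ge fun hmw => hz.2.not_ge (hm'.2 ?_)
    have hmz : m' ∈ block z := (ordConnected_block z).out (mem_block_self z) hw ⟨hz.2.le, hmw⟩
    exact (finCond α).trans hm'.1 ((finCond α).symm hmz)

lemma exists_rep_mem_Ioo {a b m m' : α} (hab : a < b) (hne : ¬ finCond α a b)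
    (hm : IsGreatest (block a) m) (hm' : IsLeast (block b) m') : ∃ z, rep z ∈ Ioo m m' := by
  have hmm' : m < m' := by
    refine lt_of_not_ge fun hm'm => hne ?_
    rcases le_total b m with hbm | hmb
    · exact (ordConnected_block a).out (mem_block_self a) hm.1 ⟨hab.le, hbm⟩
    · have : m ∈ block b := (ordConnected_block b).out hm'.1 (mem_block_self b) ⟨hm'm, hmb⟩
      exact (finCond α).trans hm.1 ((finCond α).symm this)
  have hne' : ¬ finCond α m m' := fun h =>
    hne ((finCond α).trans hm.1 ((finCond α).trans h ((finCond α).symm hm'.1)))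
  obtain ⟨z, hz⟩ := Ioo_nonempty_of_not_finCond hmm'.le hne'
  exact ⟨z, block_subset_Ioo hm hm' hz (rep_mem_block z)⟩

/-- The signed number of steps from `r` to `z` (one of the two intervals is empty). -/
noncomputable def signedCount (r z : α) : ℤ := (Ico r z).ncard - (Ico z r).ncard

lemma signedCount_self (r : α) : signedCount r r = 0 := by simp [signedCount]

lemma signedCount_add {r u v : α} (hu : u ∈ block r) (hv : v ∈ block r) (huv : u ≤ v) :
    signedCount r v = signedCount r u + (Ico u v).ncard := by
  have hfin : ∀ {a b}, a ∈ block r → b ∈ block r → (Ico a b).Finite := fun ha hb =>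
    (Icc_finite_of_mem_block ha hb).subset Ico_subset_Icc_self
  have hr := mem_block_self r
  unfold signedCount
  rcases le_total r u with hru | hur
  · rw [ncard_Ico_add hru huv (hfin hr hv), Ico_eq_empty_of_le hru,
      Ico_eq_empty_of_le (hru.trans huv)]
    simp only [ncard_empty]; push_cast; ring
  rcases le_total r v with hrv | hvr
  · rw [ncard_Ico_add hur hrv (hfin hu hv), Ico_eq_empty_of_le hur, Ico_eq_empty_of_le hrv]
    simp only [ncard_empty]; push_cast; ring
  · rw [ncard_Ico_add huv hvr (hfin hu hr), Ico_eq_empty_of_le hur, Ico_eq_empty_of_le hvr]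
    simp only [ncard_empty]; push_cast; ring

lemma exists_rep_mem_Ioo_of_finite {x y : α} (hx : (block x).Finite) (hy : (block y).Finite)
    (hxy : x < y) (hne : ¬ finCond α x y) : ∃ z, rep z ∈ Ioo x y := by
  obtain ⟨M, hM⟩ := exists_isGreatest_block (hx.subset inter_subset_left)
  obtain ⟨N, hN⟩ := exists_isLeast_block (hy.subset inter_subset_left)
  obtain ⟨z, hz⟩ := exists_rep_mem_Ioo hxy hne hM hN
  exact ⟨z, (hM.2 (mem_block_self x)).trans_lt hz.1, hz.2.trans_le (hN.2 (mem_block_self y))⟩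

lemma denseIcc_range_rep {p q : range (rep : α → α)}
    (hfin : ∀ z ∈ Icc (p : α) q, (block z).Finite) : DenseIcc p q := by
  rintro ⟨_, x, rfl⟩ ⟨_, y, rfl⟩ hpx hxy hyq
  change (p : α) ≤ rep x at hpx
  change rep x < rep y at hxy
  change rep y ≤ (q : α) at hyq
  obtain ⟨z, hz⟩ := exists_rep_mem_Ioo_of_finite (hfin _ ⟨hpx, hxy.le.trans hyq⟩)
    (hfin _ ⟨hpx.trans hxy.le, hyq⟩) hxy
    fun h => hxy.ne (by simpa [rep_rep] using rep_eq_rep.2 h)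
  exact ⟨⟨rep z, mem_range_self z⟩, hz⟩

end Condensation

section Colouring

variable {α : Type*} [LinearOrder α] {k : ℕ} (g : range (rep : α → α) → ℕ)

noncomputable def colouring (z : α) : ZMod k :=
  g ⟨rep z, mem_range_self z⟩ + signedCount (rep z) z

lemma colouring_rep (z : α) : colouring (k := k) g (rep z) = g ⟨rep z, mem_range_self z⟩ := by
  simp only [colouring, rep_rep, signedCount_self, Int.cast_zero, add_zero]

lemma colouring_of_le {u v : α} (h : v ∈ block u) (huv : u ≤ v) :
    colouring (k := k) g v = colouring g u + ((Ico u v).ncard : ZMod k) := by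
  have hrep : rep v = rep u := rep_eq_rep.2 ((finCond α).symm h)
  have hu : u ∈ block (rep u) := (finCond α).symm (rep_mem_block u)
  simp only [colouring, hrep, signedCount_add hu ((finCond α).trans hu h) huv]
  push_cast; ring

lemma le_ncard_Ico_of_colouring_eq {x y : α} (hxy : x < y) (h : y ∈ block x)
    (hc : colouring (k := k) g x = colouring g y) : k ≤ (Ico x y).ncard := by
  rw [colouring_of_le g h hxy.le, left_eq_add, ZMod.natCast_eq_zero_iff] at hc
  refine Nat.le_of_dvd ((ncard_pos ?_).2 ⟨x, left_mem_Ico.2 hxy⟩) hc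
  exact (Icc_finite_of_mem_block (mem_block_self x) h).subset Ico_subset_Icc_self

variable [NeZero k]

lemma exists_colouring_eq_of_le_ncard {a b : α} (hab : a ≤ b) (h : b ∈ block a)
    (hk : k ≤ (Ico a b).ncard) (i : ZMod k) : ∃ z ∈ Icc a b, colouring g z = i := by
  obtain ⟨z, hz, hcard⟩ := exists_ncard_Ico_eq hab
    ((Icc_finite_of_mem_block (mem_block_self a) h).subset Ico_subset_Icc_self)
    (i - colouring g a).val ((ZMod.val_lt _).le.trans hk)
  refine ⟨z, hz, ?_⟩
  rw [colouring_of_le g ((ordConnected_block a).out (mem_block_self a) h hz) hz.1, hcard,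
    ZMod.natCast_zmod_val, add_sub_cancel]

lemma exists_colouring_eq_of_infinite {s : Set α} {x : α} (hs : s.OrdConnected)
    (hinf : s.Infinite) (hx : s ⊆ block x) (i : ZMod k) : ∃ z ∈ s, colouring g z = i := by
  obtain ⟨t, hts, htk⟩ := hinf.exists_subset_card_eq (k + 1)
  have ht : t.Nonempty := Finset.card_pos.1 (by omega)
  set a := t.min' ht
  set b := t.max' ht
  have ha : a ∈ s := hts (t.min'_mem ht)
  have hb : b ∈ s := hts (t.max'_mem ht)
  have hab : a ≤ b := t.min'_le_max' ht
  have hfin := Icc_finite_of_mem_block (hx ha) (hx hb)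
  have hcard : k + 1 ≤ (Icc a b).ncard := by
    rw [← htk, ← ncard_coe_finset]
    exact ncard_le_ncard (fun z hz => ⟨t.min'_le z hz, t.le_max' z hz⟩) hfin
  rw [← Ico_insert_right hab, ncard_insert_of_notMem (fun h => h.2.false)
    (hfin.subset Ico_subset_Icc_self)] at hcard
  obtain ⟨z, hz, hzi⟩ := exists_colouring_eq_of_le_ncard g hab
    ((finCond α).trans ((finCond α).symm (hx ha)) (hx hb)) (by omega) i
  exact ⟨z, hs.out ha hb hz, hzi⟩

lemma exists_colouring_eq_of_gap
    (hg : ∀ ⦃p q : range (rep : α → α)⦄, p < q → DenseIcc p q →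
      ∀ n, ∃ z ∈ Ioo p q, g z = n)
    {a b m m' : α} (hab : a < b) (hne : ¬ finCond α a b)
    (hm : IsGreatest (block a) m) (hm' : IsLeast (block b) m') (i : ZMod k) :
    ∃ z ∈ Ioo m m', colouring g z = i := by
  have hsub : ∀ z ∈ Ioo m m', block z ⊆ Ioo m m' := fun z hz => block_subset_Ioo hm hm' hz
  by_cases hinf : ∃ z ∈ Ioo m m', (block z).Infinite
  · obtain ⟨z, hz, hinf⟩ := hinf
    obtain ⟨w, hw, hwi⟩ :=
      exists_colouring_eq_of_infinite g (ordConnected_block z) hinf subset_rfl i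
    exact ⟨w, hsub z hz hw, hwi⟩
  push Not at hinf
  obtain ⟨z₀, hz₀⟩ := exists_rep_mem_Ioo hab hne hm hm'
  obtain ⟨M, hM⟩ := exists_isGreatest_block ((hinf _ hz₀).subset inter_subset_left)
  have hb : ¬ finCond α (rep z₀) b := fun hb =>
    (hsub _ hz₀ hb).2.not_ge (hm'.2 (mem_block_self b))
  obtain ⟨z₁, hz₁⟩ :=
    exists_rep_mem_Ioo (hz₀.2.trans_le (hm'.2 (mem_block_self b))) hb hM hm'
  have hpq : rep z₀ < rep z₁ := (hM.2 (mem_block_self _)).trans_lt hz₁.1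
  have hsub' : Icc (rep z₀) (rep z₁) ⊆ Ioo m m' := Icc_subset_Ioo hz₀.1 hz₁.2
  obtain ⟨⟨_, z, rfl⟩, ⟨hpz, hzq⟩, hz⟩ := hg (p := ⟨rep z₀, mem_range_self _⟩)
    (q := ⟨rep z₁, mem_range_self _⟩) hpq
    (denseIcc_range_rep fun z hz => hinf z (hsub' hz)) i.val
  refine ⟨rep z, hsub' ⟨hpz.le, hzq.le⟩, ?_⟩
  rw [colouring_rep, hz, ZMod.natCast_zmod_val]

end Colouring

theorem exists_zmod_colouring {α : Type*} [LinearOrder α] (k : ℕ) [NeZero k] :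
    ∃ c : α → ZMod k, ∀ x y, x < y → c x = c y → ∀ i, ∃ z ∈ Icc x y, c z = i := by
  obtain ⟨g, hg⟩ := exists_rainbow_of_denseIcc (β := range (rep : α → α))
  refine ⟨colouring g, fun x y hxy hc i => ?_⟩
  by_cases hxy' : finCond α x y
  · exact exists_colouring_eq_of_le_ncard g hxy.le hxy'
      (le_ncard_Ico_of_colouring_eq g hxy hxy' hc) i
  by_cases hinf : (block x ∩ Ici x).Infinite
  · obtain ⟨z, hz, hzi⟩ := exists_colouring_eq_of_infinite g
      ((ordConnected_block x).inter ordConnected_Ici) hinf inter_subset_left i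
    exact ⟨z, block_inter_Ici_subset_Icc hxy.le hxy' hz, hzi⟩
  by_cases hinf' : (block y ∩ Iic y).Infinite
  · obtain ⟨z, hz, hzi⟩ := exists_colouring_eq_of_infinite g
      ((ordConnected_block y).inter ordConnected_Iic) hinf' inter_subset_left i
    exact ⟨z, block_inter_Iic_subset_Icc hxy.le hxy' hz, hzi⟩
  obtain ⟨m, hm⟩ := exists_isGreatest_block (not_infinite.1 hinf)
  obtain ⟨m', hm'⟩ := exists_isLeast_block (not_infinite.1 hinf')
  obtain ⟨z, hz, hzi⟩ := exists_colouring_eq_of_gap g hg hxy hxy' hm hm' i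
  exact ⟨z, Icc_subset_Icc (hm.2 (mem_block_self x)) (hm'.2 (mem_block_self y))
    (Ioo_subset_Icc_self hz), hzi⟩

end RainbowColouring

theorem colouring_exists {α : Type*} [LinearOrder α] (k : ℕ) (hk : 1 ≤ k) :
    ∃ c : α → Fin k, ∀ x y : α, x < y → c x = c y →
      ∀ i : Fin k, ∃ z : α, x ≤ z ∧ z ≤ y ∧ c z = i := by
  have : NeZero k := ⟨by omega⟩
  obtain ⟨c, hc⟩ := RainbowColouring.exists_zmod_colouring (α := α) k
  let e := (ZMod.finEquiv k).symm
  refine ⟨e ∘ c, fun x y hxy hcxy i => ?_⟩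
  obtain ⟨z, hz, hzi⟩ := hc x y hxy (e.injective hcxy) (e.symm i)
  exact ⟨z, hz.1, hz.2, by simp [hzi]⟩
end

section
/- Let α be a scattered linear ordering and R an equivalence relation on α such that: for all subsets X < Y with X² ⊆ R and Y² ⊆ R, if the intersection over all x ∈ X, y ∈ Y of the open intervals ]x,y[ is empty, then (X ∪ Y)² ⊆ R. Then R = α². -/
/-!
Replace `R` by its convex core `S`: `S a b` iff `R` holds on all of `[a, b]`. `S` is an
equivalence relation with convex classes. The gluing hypothesis, applied to the initial and final
segments of `[a, b]` that are `S`-equivalent to `a` and to `b`, shows that between two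
`S`-inequivalent points there is a point `S`-inequivalent to both. Hence a set of representatives
of the `S`-classes is dense, so by scatteredness there is only one class.
-/

/-- A linear ordering is scattered if no subordering with at least two
elements is dense (in itself). -/
def IsScattered (α : Type*) [LinearOrder α] : Prop :=
  ∀ t : Set α, (∃ a ∈ t, ∃ b ∈ t, a ≠ b) →
    ¬(∀ x ∈ t, ∀ y ∈ t, x < y → ∃ z ∈ t, x < z ∧ z < y)

open Set

section

variable {α : Type*} [LinearOrder α]

def convexCore (R : α → α → Prop) (a b : α) : Prop :=
  ∀ c ∈ uIcc a b, ∀ d ∈ uIcc a b, R c d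

namespace convexCore

variable {R : α → α → Prop}

theorem le {a b : α} (h : convexCore R a b) : R a b :=
  h a left_mem_uIcc b right_mem_uIcc

theorem of_mem_uIcc {a b c : α} (h : convexCore R a b) (hc : c ∈ uIcc a b) :
    convexCore R a c := fun x hx y hy =>
  have hsub : uIcc a c ⊆ uIcc a b := uIcc_subset_uIcc left_mem_uIcc hc
  h x (hsub hx) y (hsub hy)

theorem equivalence (hR : Equivalence R) : Equivalence (convexCore R) where
  refl a c hc d hd := by
    rw [uIcc_self, mem_singleton_iff] at hc hd
    subst hc hd
    exact hR.refl _
  symm {a b} h c hc d hd := by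
    rw [uIcc_comm] at hc hd
    exact h c hc d hd
  trans {a b c} hab hbc x hx y hy := by
    have hb₁ : b ∈ uIcc a b := right_mem_uIcc
    have hb₂ : b ∈ uIcc b c := left_mem_uIcc
    rcases uIcc_subset_uIcc_union_uIcc hx with hx | hx <;>
      rcases uIcc_subset_uIcc_union_uIcc hy with hy | hy
    · exact hab x hx y hy
    · exact hR.trans (hab x hx b hb₁) (hbc b hb₂ y hy)
    · exact hR.trans (hbc x hx b hb₂) (hab b hb₁ y hy)
    · exact hbc x hx y hy

theorem exists_between_not
    (hR : Equivalence R)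
    (hstep : ∀ X Y : Set α, (∀ x ∈ X, ∀ y ∈ Y, x < y) →
      (∀ a ∈ X, ∀ b ∈ X, R a b) → (∀ a ∈ Y, ∀ b ∈ Y, R a b) →
      (¬∃ z : α, ∀ x ∈ X, ∀ y ∈ Y, x < z ∧ z < y) →
      ∀ a ∈ X ∪ Y, ∀ b ∈ X ∪ Y, R a b)
    {a b : α} (hab : a < b) (hnab : ¬convexCore R a b) :
    ∃ w, a < w ∧ w < b ∧ ¬convexCore R a w ∧ ¬convexCore R w b := by
  have hS := equivalence hR
  by_contra! hno
  apply hnab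
  set X : Set α := {c | c ∈ Icc a b ∧ convexCore R a c}
  set Y : Set α := {c | c ∈ Icc a b ∧ convexCore R c b}
  have haX : a ∈ X := ⟨⟨le_rfl, hab.le⟩, hS.refl a⟩
  have hbY : b ∈ Y := ⟨⟨hab.le, le_rfl⟩, hS.refl b⟩
  have hXY : ∀ c ∈ X, ∀ d ∈ Y, c < d := by
    intro c hc d hd
    by_contra! hdc
    have hd' : d ∈ uIcc a c := Icc_subset_uIcc ⟨hd.1.1, hdc⟩
    exact hnab (hS.trans (hc.2.of_mem_uIcc hd') hd.2)
  have hcover : Icc a b ⊆ X ∪ Y := by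
    intro x hx
    by_cases hax : convexCore R a x
    · exact Or.inl ⟨hx, hax⟩
    have hxa : a < x := hx.1.lt_of_ne fun h => hax (h ▸ hS.refl a)
    rcases hx.2.eq_or_lt with rfl | hxb
    · exact Or.inr hbY
    · exact Or.inr ⟨hx, hno x hxa hxb hax⟩
  have hgap : ¬∃ z : α, ∀ x ∈ X, ∀ y ∈ Y, x < z ∧ z < y := by
    rintro ⟨z, hz⟩
    have haz := hz a haX b hbY
    rcases hcover ⟨haz.1.le, haz.2.le⟩ with hzX | hzY
    · exact (hz z hzX b hbY).1.false
    · exact (hz a haX z hzY).2.false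
  have hXR : ∀ c ∈ X, ∀ d ∈ X, R c d := fun c hc d hd => (hS.trans (hS.symm hc.2) hd.2).le
  have hYR : ∀ c ∈ Y, ∀ d ∈ Y, R c d := fun c hc d hd => (hS.trans hc.2 (hS.symm hd.2)).le
  intro x hx y hy
  rw [uIcc_of_le hab.le] at hx hy
  exact hstep X Y hXY hXR hYR hgap x (hcover hx) y (hcover hy)

end convexCore

theorem IsScattered.forall_of_exists_between_not (hscat : IsScattered α)
    {S : α → α → Prop} (hS : Equivalence S)
    (hconv : ∀ {a b c}, S a b → c ∈ uIcc a b → S a c)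
    (hsplit : ∀ {a b}, a < b → ¬S a b → ∃ w, a < w ∧ w < b ∧ ¬S a w ∧ ¬S w b) :
    ∀ x y, S x y := by
  let s : Setoid α := ⟨S, hS⟩
  let f : α → α := fun a => (Quotient.mk s a).out
  have hf : ∀ a, S a (f a) := fun a => hS.symm (Quotient.mk_out (s := s) a)
  have hfS : ∀ {a b}, S (f a) (f b) → S a b := fun h =>
    hS.trans (hf _) (hS.trans h (hS.symm (hf _)))
  have hf_eq : ∀ {a b}, S a b → f a = f b := fun h =>
    congrArg Quotient.out (Quotient.sound (s := s) h)
  by_contra! ⟨u, v, huv⟩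
  refine hscat (range f) ⟨f u, mem_range_self u, f v, mem_range_self v,
    fun h => huv (hfS (h ▸ hS.refl _))⟩ ?_
  rintro _ ⟨p, rfl⟩ _ ⟨q, rfl⟩ hpq
  have hnS : ¬S (f p) (f q) := fun h => hpq.ne (hf_eq (hfS h))
  obtain ⟨w, hpw, hwq, hnpw, hnwq⟩ := hsplit hpq hnS
  -- `f w` is `S`-equivalent to `w`, so by convexity it cannot lie beyond `f p` or `f q`.
  refine ⟨f w, mem_range_self w, ?_, ?_⟩
  · by_contra! hle
    have hmem : f p ∈ uIcc w (f w) := uIcc_comm (f w) w ▸ Icc_subset_uIcc ⟨hle, hpw.le⟩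
    exact hnpw (hS.symm (hconv (hf w) hmem))
  · by_contra! hle
    exact hnwq (hconv (hf w) (Icc_subset_uIcc ⟨hwq.le, hle⟩))

end

theorem scattered_induction {α : Type*} [LinearOrder α]
    (hscat : IsScattered α)
    (R : α → α → Prop) (hR : Equivalence R)
    (hstep : ∀ X Y : Set α, (∀ x ∈ X, ∀ y ∈ Y, x < y) →
      (∀ a ∈ X, ∀ b ∈ X, R a b) → (∀ a ∈ Y, ∀ b ∈ Y, R a b) →
      (¬∃ z : α, ∀ x ∈ X, ∀ y ∈ Y, x < z ∧ z < y) →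
      ∀ a ∈ X ∪ Y, ∀ b ∈ X ∪ Y, R a b) :
    ∀ x y : α, R x y := fun x y =>
  (hscat.forall_of_exists_between_not (convexCore.equivalence hR) convexCore.of_mem_uIcc
    (convexCore.exists_between_not hR hstep) x y).le
end

section
/- Let S be a finite semigroup, H an H-class of S such that (H,·) is a group, α a linear ordering, and σ an additive labelling from α to S with σ(x,y) ∈ H for all x < y. Then there exists a ramseyan split of (α,σ) of height at most |H|. -/
/-!
Pick a base point `z` and send every point `x` to the element `g x` of the group `H` "from `z`
to `x`" (`σ z x`, `(σ x z)⁻¹` or the identity), so that `σ x y = (g x)⁻¹ * g y` for `x < y`.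
Numbering the elements of `H` by `1, …, |H|` and putting `s x` = the number of `g x`, two points
with the same `s`-value have the same `g`-value, so the label between them is the identity of `H`,
an idempotent; hence `s` is ramseyan.
-/

section Green

variable {S : Type*} [Semigroup S]

/-- Green's preorder `≤_L`: `a = c * b` for some `c ∈ S¹`. -/
def leL (a b : S) : Prop := a = b ∨ ∃ c, a = c * b

/-- Green's preorder `≤_R`: `a = b * c` for some `c ∈ S¹`. -/
def leR (a b : S) : Prop := a = b ∨ ∃ c, a = b * c

/-- Green's preorder `≤_J`: `a = c * b * c'` for some `c, c' ∈ S¹`. -/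
def leJ (a b : S) : Prop :=
  a = b ∨ (∃ c, a = c * b) ∨ (∃ c, a = b * c) ∨ (∃ c c', a = c * b * c')

/-- Green's relation `L`. -/
def eqL (a b : S) : Prop := leL a b ∧ leL b a

/-- Green's relation `R`. -/
def eqR (a b : S) : Prop := leR a b ∧ leR b a

/-- Green's relation `H = L ∩ R`. -/
def eqH (a b : S) : Prop := eqL a b ∧ eqR a b

/-- Green's relation `D = L ∘ R`. -/
def eqD (a b : S) : Prop := ∃ c, eqL a c ∧ eqR c b

/-- Green's relation `J`. -/
def eqJ (a b : S) : Prop := leJ a b ∧ leJ b a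

/-- `H` is an `H`-class of `S`. -/
def IsHClass (H : Set S) : Prop := ∃ a, H = {b | eqH a b}

/-- `L` is an `L`-class of `S`. -/
def IsLClass (L : Set S) : Prop := ∃ a, L = {b | eqL a b}

/-- `D` is a `D`-class of `S`. -/
def IsDClass (D : Set S) : Prop := ∃ a, D = {b | eqD a b}

/-- An `H`-class is a group if it is closed under the product and forms a
group with the induced operation. -/
def IsGroupHClass (H : Set S) : Prop :=
  (∀ a ∈ H, ∀ b ∈ H, a * b ∈ H) ∧
  ∃ e ∈ H, e * e = e ∧
    ∀ a ∈ H, e * a = a ∧ a * e = a ∧ ∃ b ∈ H, a * b = e ∧ b * a = e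

/-- A regular `D`-class: a `D`-class containing an idempotent. -/
def IsRegularDClass (D : Set S) : Prop := IsDClass D ∧ ∃ e ∈ D, e * e = e

end Green

theorem IsGroupHClass.exists_group {S : Type*} [Semigroup S] {H : Set S}
    (hH : IsGroupHClass H) : ∃ _ : Group H, ∀ a b : H, ((a * b : H) : S) = a * b := by
  obtain ⟨hmul, e, heH, -, hid⟩ := hH
  choose inv hinvH _ hinv using fun a : H => (hid a a.2).2.2
  let : Mul H := ⟨fun a b => ⟨a * b, hmul a a.2 b b.2⟩⟩
  let : One H := ⟨⟨e, heH⟩⟩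
  let : Inv H := ⟨fun a => ⟨inv a, hinvH a⟩⟩
  exact ⟨Group.ofLeftAxioms (fun a b c => Subtype.ext (mul_assoc (a : S) b c))
    (fun a => Subtype.ext (hid a a.2).1) (fun a => Subtype.ext (hinv a)), fun _ _ => rfl⟩

theorem exists_mul_eq_of_isAdditive {α G : Type*} [LinearOrder α] [Group G] (τ : α → α → G)
    (hτ : ∀ x y z : α, x < y → y < z → τ x y * τ y z = τ x z) :
    ∃ g : α → G, ∀ x y : α, x < y → g x * τ x y = g y := by
  rcases isEmpty_or_nonempty α with hα | ⟨⟨z⟩⟩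
  · exact ⟨fun _ => 1, fun x => hα.elim x⟩
  let g x := if z < x then τ z x else if x < z then (τ x z)⁻¹ else 1
  have g_of_gt {x} (h : z < x) : g x = τ z x := if_pos h
  have g_of_lt {x} (h : x < z) : g x = (τ x z)⁻¹ := by simp [g, h, h.not_gt]
  have g_self : g z = 1 := by simp [g]
  refine ⟨g, fun x y hxy => ?_⟩
  rcases lt_trichotomy x z with hx | rfl | hx
  · rw [g_of_lt hx]
    rcases lt_trichotomy y z with hy | rfl | hy
    · rw [g_of_lt hy, inv_mul_eq_iff_eq_mul, eq_mul_inv_iff_mul_eq, hτ x y z hxy hy]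
    · rw [g_self, inv_mul_cancel]
    · rw [g_of_gt hy, ← hτ x z y hx hy, inv_mul_cancel_left]
  · rw [g_self, g_of_gt hxy, one_mul]
  · rw [g_of_gt hx, g_of_gt (hx.trans hxy), hτ z x y hx hxy]

theorem isRamseyanSplit_of_eq_idempotent {α S : Type*} [LinearOrder α] [Semigroup S]
    {σ : α → α → S} {s : α → ℕ} {e : S} (he : e * e = e)
    (h : ∀ x y : α, x < y → s x = s y → σ x y = e) : IsRamseyanSplit σ s := by
  intro k x y x' y' hxy hxy' hk
  have hs {a} (ha : a ∈ ({x, y, x', y'} : Set α)) : s a = k := (hk a ha a ha).1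
  rw [h x y hxy (by rw [hs (by simp), hs (by simp)]),
    h x' y' hxy' (by rw [hs (by simp), hs (by simp)])]
  exact ⟨rfl, he⟩

theorem split_of_group_Hclass_general {α S : Type*} [LinearOrder α] [Semigroup S] [Fintype S]
    (H : Set S) (hgrp : IsGroupHClass H)
    (σ : α → α → S) (hσ : IsAdditive σ) (hσH : ∀ x y : α, x < y → σ x y ∈ H) :
    ∃ s : α → ℕ, (∀ x, 1 ≤ s x ∧ s x ≤ H.ncard) ∧ IsRamseyanSplit σ s := by
  obtain ⟨_, hmul⟩ := hgrp.exists_group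
  let τ x y : H := if h : x < y then ⟨σ x y, hσH x y h⟩ else 1
  have hτ {x y} (h : x < y) : (τ x y : S) = σ x y := by simp [τ, h]
  obtain ⟨g, hg⟩ := exists_mul_eq_of_isAdditive τ fun x y z hxy hyz => Subtype.ext <| by
    rw [hmul, hτ hxy, hτ hyz, hτ (hxy.trans hyz), hσ x y z hxy hyz]
  let c := Finite.equivFin H
  refine ⟨fun x => c (g x) + 1, fun x => ⟨le_add_self, ?_⟩, ?_⟩
  · rw [← Nat.card_coe_set_eq]
    exact (c (g x)).isLt
  · refine isRamseyanSplit_of_eq_idempotent (e := ((1 : H) : S))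
      (by rw [← hmul, mul_one]) fun x y hxy hs => ?_
    have hgxy : g x = g y := c.injective (Fin.ext (Nat.add_right_cancel hs))
    rw [← hτ hxy, mul_eq_left.mp ((hg x y hxy).trans hgxy.symm)]

theorem split_of_group_Hclass {α S : Type*} [LinearOrder α] [Semigroup S] [Fintype S]
    (H : Set S) (hH : IsHClass H) (hgrp : IsGroupHClass H)
    (σ : α → α → S) (hσ : IsAdditive σ) (hσH : ∀ x y : α, x < y → σ x y ∈ H) :
    ∃ s : α → ℕ, (∀ x, 1 ≤ s x ∧ s x ≤ H.ncard) ∧ IsRamseyanSplit σ s :=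
  split_of_group_Hclass_general H hgrp σ hσ hσH
end

section
/- Let L be an L-class contained in a regular D-class of a finite semigroup S. Then there exists an H-class H ⊆ L which is a group, and a map f : L → H such that: (1) for all a, b ∈ L with ab ∈ L, f(ab) = f(a)f(b); and (2) for every H-class H' ⊆ L, the restriction of f to H' is a bijection from H' onto H. -/
/-!
The L-class contains an idempotent `e` (its elements are regular), and `H_e` is a group. For each
H-class `K` in the L-class choose `y_K ∈ S` such that `w ↦ y_K * w` maps `K` into `H_e` and sends
the idempotent of `K`, if any, to `e` (take `y_K = e` if `K` has an idempotent, and any `y` with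
`y * x = e`, `x ∈ K`, otherwise); by Green's lemma `w ↦ y_K * w` is a bijection `K → H_e`, and
`f x := y_{H_x} * x`. If `a`, `b`, `a * b` lie in the L-class then `a * b R a` by stability, so
`y_{H_{ab}} = y_{H_a}`, and by Clifford–Miller `H_b` contains an idempotent `g`, whence
`y_{H_b} * b = y_{H_b} * g * b = e * b`; thus `f a * f b = y_{H_a} * a * e * b = f (a * b)`.
-/

instance WithOne.instFinite {α : Type*} [Finite α] : Finite (WithOne α) :=
  inferInstanceAs (Finite (Option α))

section Monoid

variable {M : Type*} [Monoid M]

theorem exists_isIdempotentElem_pow [Finite M] (u : M) :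
    ∃ n, 0 < n ∧ IsIdempotentElem (u ^ n) := by
  obtain ⟨i, j, hne, hij⟩ := Finite.exists_ne_map_eq_of_infinite (u ^ · : ℕ → M)
  wlog hlt : i < j generalizing i j
  · exact this j i hne.symm hij.symm (by omega)
  obtain ⟨p, rfl⟩ := Nat.exists_eq_add_of_lt hlt
  have hper : ∀ k, u ^ (i + k * (p + 1)) = u ^ i := by
    intro k
    induction k with
    | zero => simp
    | succ k ih => rw [add_mul, one_mul, ← add_assoc, pow_add, ih, ← pow_add, ← add_assoc, hij]
  obtain ⟨r, hr⟩ := Nat.exists_eq_add_of_le' (show i ≤ (i + 1) * (p + 1) by nlinarith)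
  refine ⟨(i + 1) * (p + 1), by positivity, ?_⟩
  calc u ^ ((i + 1) * (p + 1)) * u ^ ((i + 1) * (p + 1))
      = u ^ r * u ^ (i + (i + 1) * (p + 1)) := by rw [hr, ← pow_add, ← pow_add, add_assoc]
    _ = u ^ ((i + 1) * (p + 1)) := by rw [hper, ← pow_add, hr]

theorem exists_eq_mul_pow_of_eq_mul_mul [Finite M] {a u v : M} (h : a = u * a * v) :
    ∃ n, a = a * v ^ (n + 1) := by
  have hiter : ∀ k, a = u ^ k * a * v ^ k := by
    intro k
    induction k with
    | zero => simp
    | succ k ih =>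
      calc a = u ^ k * (u * a * v) * v ^ k := by rw [← h, ← ih]
        _ = u ^ (k + 1) * a * v ^ (k + 1) := by
            rw [pow_succ u, pow_succ' v]; simp only [mul_assoc]
  obtain ⟨n, hn, hidem⟩ := exists_isIdempotentElem_pow v
  obtain ⟨m, rfl⟩ : ∃ m, n = m + 1 := ⟨n - 1, by omega⟩
  refine ⟨m, ?_⟩
  calc a = u ^ (m + 1) * a * (v ^ (m + 1) * v ^ (m + 1)) := by rw [hidem.eq, ← hiter]
    _ = a * v ^ (m + 1) := by rw [← mul_assoc, ← hiter]

end Monoid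

section Green

variable {S : Type*} [Semigroup S] {a b c e x x' w w' : S} {y z : WithOne S}

theorem WithOne.exists_mul_coe_eq (c : WithOne S) (a : S) : ∃ b : S, c * a = b := by
  induction c using WithOne.recOneCoe with
  | one => exact ⟨a, one_mul _⟩
  | coe c => exact ⟨c * a, (WithOne.coe_mul c a).symm⟩

theorem WithOne.exists_coe_mul_eq (a : S) (c : WithOne S) : ∃ b : S, a * c = b := by
  induction c using WithOne.recOneCoe with
  | one => exact ⟨a, mul_one _⟩
  | coe c => exact ⟨a * c, (WithOne.coe_mul a c).symm⟩

theorem leL_iff : leL a b ↔ ∃ c : WithOne S, (a : WithOne S) = c * b := by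
  constructor
  · rintro (rfl | ⟨c, rfl⟩)
    · exact ⟨1, (one_mul _).symm⟩
    · exact ⟨c, WithOne.coe_mul c b⟩
  · rintro ⟨c, hc⟩
    induction c using WithOne.recOneCoe with
    | one => exact Or.inl (WithOne.coe_inj.mp (by simpa using hc))
    | coe c => exact Or.inr ⟨c, WithOne.coe_inj.mp (by simpa using hc)⟩

theorem leR_iff : leR a b ↔ ∃ c : WithOne S, (a : WithOne S) = b * c := by
  constructor
  · rintro (rfl | ⟨c, rfl⟩)
    · exact ⟨1, (mul_one _).symm⟩
    · exact ⟨c, WithOne.coe_mul b c⟩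
  · rintro ⟨c, hc⟩
    induction c using WithOne.recOneCoe with
    | one => exact Or.inl (WithOne.coe_inj.mp (by simpa using hc))
    | coe c => exact Or.inr ⟨c, WithOne.coe_inj.mp (by simpa using hc)⟩

theorem leL_mul_left (a b : S) : leL (a * b) b := Or.inr ⟨a, rfl⟩

theorem leR_mul_right (a b : S) : leR (a * b) a := Or.inr ⟨b, rfl⟩

theorem leL.trans (h₁ : leL a b) (h₂ : leL b c) : leL a c := by
  obtain ⟨x, hx⟩ := leL_iff.1 h₁
  obtain ⟨y, hy⟩ := leL_iff.1 h₂
  exact leL_iff.2 ⟨x * y, by rw [hx, hy, mul_assoc]⟩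

theorem leR.trans (h₁ : leR a b) (h₂ : leR b c) : leR a c := by
  obtain ⟨x, hx⟩ := leR_iff.1 h₁
  obtain ⟨y, hy⟩ := leR_iff.1 h₂
  exact leR_iff.2 ⟨y * x, by rw [hx, hy, mul_assoc]⟩

theorem leL.mul_right (h : leL a b) (c : S) : leL (a * c) (b * c) := by
  obtain ⟨x, hx⟩ := leL_iff.1 h
  exact leL_iff.2 ⟨x, by rw [WithOne.coe_mul, WithOne.coe_mul, hx, mul_assoc]⟩

theorem leR.mul_left (h : leR a b) (c : S) : leR (c * a) (c * b) := by
  obtain ⟨x, hx⟩ := leR_iff.1 h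
  exact leR_iff.2 ⟨x, by rw [WithOne.coe_mul, WithOne.coe_mul, hx, mul_assoc]⟩

theorem eqL.refl (a : S) : eqL a a := ⟨Or.inl rfl, Or.inl rfl⟩

theorem eqL.symm (h : eqL a b) : eqL b a := ⟨h.2, h.1⟩

theorem eqL.trans (h₁ : eqL a b) (h₂ : eqL b c) : eqL a c := ⟨h₁.1.trans h₂.1, h₂.2.trans h₁.2⟩

theorem eqR.refl (a : S) : eqR a a := ⟨Or.inl rfl, Or.inl rfl⟩

theorem eqR.symm (h : eqR a b) : eqR b a := ⟨h.2, h.1⟩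

theorem eqR.trans (h₁ : eqR a b) (h₂ : eqR b c) : eqR a c := ⟨h₁.1.trans h₂.1, h₂.2.trans h₁.2⟩

theorem eqH.refl (a : S) : eqH a a := ⟨eqL.refl a, eqR.refl a⟩

theorem eqH.symm (h : eqH a b) : eqH b a := ⟨h.1.symm, h.2.symm⟩

theorem eqH.trans (h₁ : eqH a b) (h₂ : eqH b c) : eqH a c := ⟨h₁.1.trans h₂.1, h₁.2.trans h₂.2⟩

theorem setOf_eqL_eq (h : eqL a b) : {x | eqL a x} = {x | eqL b x} :=
  Set.ext fun _ => ⟨h.symm.trans, h.trans⟩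

theorem setOf_eqH_eq (h : eqH a b) : {x | eqH a x} = {x | eqH b x} :=
  Set.ext fun _ => ⟨h.symm.trans, h.trans⟩

theorem IsIdempotentElem.mul_eq_of_leL (he : IsIdempotentElem e) (h : leL x e) : x * e = x := by
  obtain ⟨c, hc⟩ := leL_iff.1 h
  apply WithOne.coe_inj.1
  rw [WithOne.coe_mul, hc, mul_assoc, ← WithOne.coe_mul, he.eq]

theorem IsIdempotentElem.mul_eq_of_leR (he : IsIdempotentElem e) (h : leR x e) : e * x = x := by
  obtain ⟨c, hc⟩ := leR_iff.1 h
  apply WithOne.coe_inj.1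
  rw [WithOne.coe_mul, hc, ← mul_assoc, ← WithOne.coe_mul, he.eq]

def IsRegularElem (a : S) : Prop := ∃ p : WithOne S, (a : WithOne S) = a * p * a

theorem IsIdempotentElem.isRegularElem (he : IsIdempotentElem e) : IsRegularElem e :=
  ⟨1, by rw [mul_one, ← WithOne.coe_mul, he.eq]⟩

theorem IsRegularElem.of_eqR (ha : IsRegularElem a) (h : eqR a b) : IsRegularElem b := by
  obtain ⟨p, hp⟩ := ha
  obtain ⟨s, hs⟩ := leR_iff.1 h.2
  obtain ⟨t, ht⟩ := leR_iff.1 h.1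
  refine ⟨t * p, ?_⟩
  calc (b : WithOne S) = a * p * (a * s) := by rw [hs]; nth_rewrite 1 [hp]; simp only [mul_assoc]
    _ = b * (t * p) * b := by rw [← hs, ht]; simp only [mul_assoc]

theorem IsRegularElem.of_eqL (ha : IsRegularElem a) (h : eqL a b) : IsRegularElem b := by
  obtain ⟨p, hp⟩ := ha
  obtain ⟨s, hs⟩ := leL_iff.1 h.2
  obtain ⟨t, ht⟩ := leL_iff.1 h.1
  refine ⟨p * t, ?_⟩
  calc (b : WithOne S) = s * a * p * a := by rw [hs]; nth_rewrite 1 [hp]; simp only [mul_assoc]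
    _ = b * (p * t) * b := by rw [← hs, ht]; simp only [mul_assoc]

theorem IsRegularElem.exists_idempotent_eqL (ha : IsRegularElem a) :
    ∃ e, IsIdempotentElem e ∧ eqL e a := by
  obtain ⟨p, hp⟩ := ha
  obtain ⟨e, he⟩ := WithOne.exists_mul_coe_eq p a
  refine ⟨e, WithOne.coe_inj.1 ?_, leL_iff.2 ⟨p, he.symm⟩, leL_iff.2 ⟨a, ?_⟩⟩
  · rw [WithOne.coe_mul, ← he, mul_assoc, ← mul_assoc (a : WithOne S), ← hp]
  · rw [← he, ← mul_assoc, ← hp]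

theorem IsRegularDClass.isRegularElem {D : Set S} (hD : IsRegularDClass D) (ha : a ∈ D) :
    IsRegularElem a := by
  obtain ⟨⟨d, rfl⟩, u, ⟨c, hdc, hcu⟩, hu⟩ := hD
  obtain ⟨c', hdc', hc'a⟩ := ha
  have hd : IsRegularElem d := ((IsIdempotentElem.isRegularElem hu).of_eqR hcu.symm).of_eqL hdc.symm
  exact (hd.of_eqL hdc').of_eqR hc'a

theorem IsIdempotentElem.mul_mem_setOf_eqH (he : IsIdempotentElem e) (ha : eqH e a)
    (hb : eqH e b) : eqH e (a * b) := by
  have heb : e * b = b := he.mul_eq_of_leR hb.2.2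
  have hae : a * e = a := he.mul_eq_of_leL ha.1.2
  refine ⟨⟨?_, (leL_mul_left a b).trans hb.1.2⟩, ?_, (leR_mul_right a b).trans ha.2.2⟩
  · exact hb.1.1.trans (by simpa only [heb] using ha.1.1.mul_right b)
  · exact ha.2.1.trans (by simpa only [hae] using hb.2.1.mul_left a)

theorem IsIdempotentElem.exists_inverse_of_eqH (he : IsIdempotentElem e) (ha : eqH e a) :
    ∃ b, eqH e b ∧ a * b = e ∧ b * a = e := by
  obtain ⟨v, hv⟩ := leL_iff.1 ha.1.1
  obtain ⟨w, hw⟩ := leR_iff.1 ha.2.1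
  obtain ⟨b, hb⟩ := WithOne.exists_mul_coe_eq ((e : WithOne S) * v) e
  have hea : e * a = a := he.mul_eq_of_leR ha.2.2
  have hae : a * e = a := he.mul_eq_of_leL ha.1.2
  have hba : b * a = e := WithOne.coe_inj.1 <| by
    rw [WithOne.coe_mul, ← hb, mul_assoc, ← WithOne.coe_mul e a, hea, mul_assoc, ← hv,
      ← WithOne.coe_mul, he.eq]
  have hab : a * b = e := WithOne.coe_inj.1 <| by
    calc ((a * b : S) : WithOne S) = ↑(a * e) * v * ↑e := by
          rw [WithOne.coe_mul, ← hb, WithOne.coe_mul]; simp only [mul_assoc]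
      _ = a * (v * a) * w := by rw [hae, hw]; simp only [mul_assoc]
      _ = e := by rw [← hv, ← WithOne.coe_mul, hae, ← hw]
  refine ⟨b, ⟨⟨Or.inr ⟨a, hab.symm⟩, leL_iff.2 ⟨e * v, hb.symm⟩⟩,
    Or.inr ⟨a, hba.symm⟩, leR_iff.2 ⟨v * e, by rw [← hb, mul_assoc]⟩⟩, hab, hba⟩

theorem IsIdempotentElem.isGroupHClass_setOf_eqH (he : IsIdempotentElem e) :
    IsGroupHClass {x | eqH e x} :=
  ⟨fun _ ha _ hb => he.mul_mem_setOf_eqH ha hb, e, eqH.refl e, he, fun _ ha =>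
    ⟨he.mul_eq_of_leR ha.2.2, he.mul_eq_of_leL ha.1.2, he.exists_inverse_of_eqH ha⟩⟩

theorem mul_mul_eq_of_leR (hy : (x' : WithOne S) = y * x) (hz : (x : WithOne S) = z * x')
    (hw : leR w x) : z * (y * w) = w := by
  obtain ⟨s, hs⟩ := leR_iff.1 hw
  rw [hs, ← mul_assoc y, ← hy, ← mul_assoc, ← hz]

theorem eqH_of_eq_mul (hy : (x' : WithOne S) = y * x) (hz : (x : WithOne S) = z * x')
    (hw : eqH x w) (hw' : (w' : WithOne S) = y * w) : eqH x' w' := by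
  have hzw : (w : WithOne S) = z * w' := by rw [hw', mul_mul_eq_of_leR hy hz hw.2.2]
  have hxx' : eqL x x' := ⟨leL_iff.2 ⟨z, hz⟩, leL_iff.2 ⟨y, hy⟩⟩
  have hww' : eqL w w' := ⟨leL_iff.2 ⟨z, hzw⟩, leL_iff.2 ⟨y, hw'⟩⟩
  obtain ⟨t, ht⟩ := leR_iff.1 hw.2.1
  obtain ⟨s, hs⟩ := leR_iff.1 hw.2.2
  exact ⟨hxx'.symm.trans (hw.1.trans hww'),
    leR_iff.2 ⟨t, by rw [hy, ht, ← mul_assoc, ← hw']⟩,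
    leR_iff.2 ⟨s, by rw [hw', hs, ← mul_assoc, ← hy]⟩⟩

theorem bijOn_mul_left_setOf_eqH {y : S} (hy : x' = y * x) (hx : leL x x') :
    Set.BijOn (y * ·) {w | eqH x w} {w | eqH x' w} := by
  obtain ⟨z, hz⟩ := leL_iff.1 hx
  have hy' : (x' : WithOne S) = y * x := by rw [hy, WithOne.coe_mul]
  refine ⟨fun w hw => eqH_of_eq_mul hy' hz hw (WithOne.coe_mul y w),
    fun w₁ hw₁ w₂ hw₂ h => WithOne.coe_inj.1 ?_, fun w' hw' => ?_⟩
  · rw [← mul_mul_eq_of_leR hy' hz hw₁.2.2, ← mul_mul_eq_of_leR hy' hz hw₂.2.2,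
      ← WithOne.coe_mul, ← WithOne.coe_mul, show y * w₁ = y * w₂ from h]
  · obtain ⟨w, hw⟩ := WithOne.exists_mul_coe_eq z w'
    refine ⟨w, eqH_of_eq_mul hz hy' hw' hw.symm, WithOne.coe_inj.1 ?_⟩
    rw [WithOne.coe_mul, ← hw, mul_mul_eq_of_leR hz hy' hw'.2.2]

theorem exists_idempotent_eqL_eqR_of_mul (hR : leR a (a * b)) (hL : leL b (a * b)) :
    ∃ g, IsIdempotentElem g ∧ eqL a g ∧ eqR b g := by
  obtain ⟨t, ht⟩ := leR_iff.1 hR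
  obtain ⟨d, hd⟩ := leL_iff.1 hL
  obtain ⟨g, hg⟩ := WithOne.exists_coe_mul_eq b t
  have hbtb : (b : WithOne S) * t * b = b :=
    calc (b : WithOne S) * t * b = d * (↑(a * b) * t) * b := by
          nth_rewrite 1 [hd]; simp only [mul_assoc]
      _ = b := by rw [← ht, mul_assoc, ← WithOne.coe_mul, ← hd]
  refine ⟨g, WithOne.coe_inj.1 ?_, ⟨leL_iff.2 ⟨a, ?_⟩, leL_iff.2 ⟨d, ?_⟩⟩,
    leR_iff.2 ⟨b, by rw [← hg, hbtb]⟩, leR_iff.2 ⟨t, hg.symm⟩⟩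
  · rw [WithOne.coe_mul, ← hg, ← mul_assoc, hbtb]
  · rw [← hg, ← mul_assoc, ← WithOne.coe_mul, ← ht]
  · rw [← hg, hd, mul_assoc, ← ht]

theorem eqR_mul_of_leL [Finite S] (h : leL a (a * b)) : eqR (a * b) a := by
  obtain ⟨w, hw⟩ := leL_iff.1 h
  obtain ⟨n, hn⟩ := exists_eq_mul_pow_of_eq_mul_mul
    (show (a : WithOne S) = w * a * b by rw [mul_assoc, ← WithOne.coe_mul, hw])
  exact ⟨leR_mul_right a b, leR_iff.2 ⟨(b : WithOne S) ^ n, by rw [WithOne.coe_mul, mul_assoc,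
    ← pow_succ', ← hn]⟩⟩

end Green

section Retraction

variable {S : Type*} [Semigroup S] {a b e x : S}

def IsRetractionFactor (e : S) (K : Set S) (y : S) : Prop :=
  ∀ w ∈ K, eqH e (y * w) ∧ (IsIdempotentElem w → y * w = e)

theorem exists_isRetractionFactor (he : IsIdempotentElem e) (hx : eqL e x) :
    ∃ y, IsRetractionFactor e {w | eqH x w} y := by
  by_cases hidem : ∃ g, eqH x g ∧ IsIdempotentElem g
  · obtain ⟨g, hxg, hg⟩ := hidem
    have hge : eqL g e := (hx.trans hxg.1).symm
    have hmaps := (bijOn_mul_left_setOf_eqH (hg.mul_eq_of_leL hge.2).symm hge.1).mapsTo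
    rw [← setOf_eqH_eq hxg] at hmaps
    exact ⟨e, fun w hw => ⟨hmaps hw, fun hw' => hw'.mul_eq_of_leL (hx.trans hw.1).1⟩⟩
  · obtain ⟨y, hy⟩ : ∃ y, e = y * x := hx.1.elim (fun h => ⟨x, by rw [← h, he.eq]⟩) id
    exact ⟨y, fun w hw =>
      ⟨(bijOn_mul_left_setOf_eqH hy hx.2).mapsTo hw, fun hw' => absurd ⟨w, hw, hw'⟩ hidem⟩⟩

-- The choice depends on `x` only through its H-class, so the factor is constant on H-classes.
noncomputable def retractionFactor (e x : S) : S :=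
  haveI : Nonempty S := ⟨e⟩
  Classical.epsilon (IsRetractionFactor e {w | eqH x w})

theorem isRetractionFactor_retractionFactor (he : IsIdempotentElem e) (hx : eqL e x) :
    IsRetractionFactor e {w | eqH x w} (retractionFactor e x) :=
  Classical.epsilon_spec (exists_isRetractionFactor he hx)

theorem retractionFactor_congr {x' : S} (h : eqH x x') :
    retractionFactor e x = retractionFactor e x' := by
  rw [retractionFactor, retractionFactor, setOf_eqH_eq h]

noncomputable def retraction (e x : S) : S := retractionFactor e x * x

theorem retraction_mem_setOf_eqH (he : IsIdempotentElem e) (hx : eqL e x) :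
    eqH e (retraction e x) :=
  (isRetractionFactor_retractionFactor he hx x (eqH.refl x)).1

theorem bijOn_retraction (he : IsIdempotentElem e) (hx : eqL e x) :
    Set.BijOn (retraction e) {w | eqH x w} {w | eqH e w} := by
  have hyx := retraction_mem_setOf_eqH he hx
  have hbij := bijOn_mul_left_setOf_eqH (x' := retraction e x) (y := retractionFactor e x) rfl (hx.symm.trans hyx.1).1
  rw [← setOf_eqH_eq hyx] at hbij
  exact hbij.congr fun w hw => by simp only [retraction, retractionFactor_congr hw.symm]

theorem retraction_mul [Finite S] (he : IsIdempotentElem e) (ha : eqL e a) (hb : eqL e b)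
    (hab : eqL e (a * b)) : retraction e (a * b) = retraction e a * retraction e b := by
  have hR : eqR (a * b) a := eqR_mul_of_leL (ha.symm.trans hab).1
  obtain ⟨g, hg, hag, hbg⟩ := exists_idempotent_eqL_eqR_of_mul hR.2 (hb.symm.trans hab).1
  have hbg' : eqH b g := ⟨hb.symm.trans (ha.trans hag), hbg⟩
  have hfactor_b : retractionFactor e b * b = e * b :=
    calc retractionFactor e b * b = retractionFactor e b * g * b := by
          rw [mul_assoc, hg.mul_eq_of_leR hbg.1]
      _ = e * b := by rw [((isRetractionFactor_retractionFactor he hb) g hbg').2 hg]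
  calc retraction e (a * b) = retractionFactor e a * (a * e * b) := by
        rw [retraction, retractionFactor_congr ⟨hab.symm.trans ha, hR⟩, he.mul_eq_of_leL ha.2]
    _ = retraction e a * retraction e b := by
        rw [retraction, retraction, hfactor_b]; simp only [mul_assoc]

end Retraction

theorem Lclass_group_retraction {S : Type*} [Semigroup S] [Fintype S]
    (Lc : Set S) (hLc : IsLClass Lc)
    (hreg : ∃ D : Set S, IsRegularDClass D ∧ Lc ⊆ D) :
    ∃ H : Set S, IsHClass H ∧ H ⊆ Lc ∧ IsGroupHClass H ∧
      ∃ f : S → S, (∀ a ∈ Lc, f a ∈ H) ∧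
        (∀ a ∈ Lc, ∀ b ∈ Lc, a * b ∈ Lc → f (a * b) = f a * f b) ∧
        (∀ H' : Set S, IsHClass H' → H' ⊆ Lc → Set.BijOn f H' H) := by
  obtain ⟨a, rfl⟩ := hLc
  obtain ⟨D, hD, hLD⟩ := hreg
  obtain ⟨e, he, hea⟩ := (hD.isRegularElem (hLD (eqL.refl a))).exists_idempotent_eqL
  rw [setOf_eqL_eq hea.symm]
  refine ⟨{x | eqH e x}, ⟨e, rfl⟩, fun x hx => hx.1, he.isGroupHClass_setOf_eqH, retraction e,
    fun x hx => retraction_mem_setOf_eqH he hx, fun x hx y hy hxy => retraction_mul he hx hy hxy, ?_⟩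
  rintro _ ⟨x, rfl⟩ hsub
  exact bijOn_retraction he (hsub (eqH.refl x))
end

section
/- In a finite semigroup S, let H be an H-class. Either for all a, b ∈ H, ab ∉ H; or for all a, b ∈ H, ab ∈ H, and in the latter case (H,·) is a group. -/
/-!
Pass to the monoid `S¹ = WithOne S`, where `≤_L` and `≤_R` become right and left divisibility.
If `a, b, ab` lie in one `H`-class `H`, then `a H ab` forces right multiplication by `b` to map
`H` onto itself (Green's lemma), and `b H ab` does the same for left multiplication by `a`.
Hence `H` is closed under the product, and then `xH = H = Hx` for every `x ∈ H`: a semigroup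
in which all equations `xz = y`, `zx = y` are solvable is a group.
-/

section Monoid

variable {M : Type*} [Monoid M] {a b c x y : M}

/-- Green's relation `H` in a monoid: `a ∣ᵣ b` is `b ≤_L a` and `a ∣ b` is `b ≤_R a`. -/
structure GreenH (a b : M) : Prop where
  rightDvd : a ∣ᵣ b
  rightDvd' : b ∣ᵣ a
  dvd : a ∣ b
  dvd' : b ∣ a

namespace GreenH

protected lemma symm (h : GreenH a b) : GreenH b a := ⟨h.2, h.1, h.4, h.3⟩

protected lemma trans (h : GreenH a b) (h' : GreenH b c) : GreenH a c :=
  ⟨h.1.trans h'.1, h'.2.trans h.2, h.3.trans h'.3, h'.4.trans h.4⟩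

end GreenH

lemma mul_dvd_self_of_mul_dvd_self (h : a * b ∣ a) (hx : a ∣ᵣ x) : x * b ∣ x := by
  obtain ⟨v, hv⟩ := h
  obtain ⟨s, rfl⟩ := hx
  exact ⟨v, by rw [mul_assoc s, mul_assoc s, ← hv]⟩

lemma mul_rightDvd_self_of_mul_rightDvd_self (h : a * b ∣ᵣ b) (hx : b ∣ x) : a * x ∣ᵣ x := by
  obtain ⟨w, hw⟩ := h
  obtain ⟨s, rfl⟩ := hx
  exact ⟨w, by rw [← mul_assoc a, ← mul_assoc w, ← hw]⟩

namespace GreenH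

lemma mul_right (h : GreenH a (a * b)) (hx : GreenH a x) : GreenH a (x * b) where
  rightDvd := h.rightDvd.trans (hx.rightDvd.mul_const b)
  rightDvd' := (hx.rightDvd'.mul_const b).trans h.rightDvd'
  dvd := hx.dvd.mul_right b
  dvd' := (mul_dvd_self_of_mul_dvd_self h.dvd' hx.rightDvd).trans hx.dvd'

lemma mul_left (h : GreenH b (a * b)) (hx : GreenH b x) : GreenH b (a * x) where
  rightDvd := hx.rightDvd.mul_left a
  rightDvd' := (mul_rightDvd_self_of_mul_rightDvd_self h.rightDvd' hx.dvd).trans hx.rightDvd'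
  dvd := h.dvd.trans (mul_dvd_mul_left a hx.dvd)
  dvd' := (mul_dvd_mul_left a hx.dvd').trans h.dvd'

lemma exists_mul_right_eq (h : GreenH a (a * b)) (hy : GreenH a y) :
    ∃ x, GreenH a x ∧ x * b = y := by
  obtain ⟨v, hv⟩ := h.dvd'
  -- right multiplication by `v` inverts right multiplication by `b` on this `H`-class
  have hv' : GreenH (a * b) (a * b * v) := hv ▸ h.symm
  have hy' : GreenH (a * b) y := h.symm.trans hy
  obtain ⟨w, rfl⟩ := hy'.rightDvd
  refine ⟨w * (a * b) * v, h.trans (hv'.mul_right hy'), ?_⟩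
  rw [mul_assoc w, ← hv, mul_assoc]

lemma exists_mul_left_eq (h : GreenH b (a * b)) (hy : GreenH b y) :
    ∃ x, GreenH b x ∧ a * x = y := by
  obtain ⟨w, hw⟩ := h.rightDvd'
  have hw' : GreenH (a * b) (w * (a * b)) := hw ▸ h.symm
  have hy' : GreenH (a * b) y := h.symm.trans hy
  obtain ⟨t, rfl⟩ := hy'.dvd
  refine ⟨w * (a * b * t), h.trans (hw'.mul_left hy'), ?_⟩
  rw [← mul_assoc w, ← hw, mul_assoc]

lemma mul_mem_of_mul_mem (ha : GreenH c a) (hb : GreenH c b) (hab : GreenH c (a * b))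
    (hx : GreenH c x) (hy : GreenH c y) : GreenH c (x * y) := by
  have hxb : GreenH b (x * b) :=
    (hb.symm.trans ha).trans ((ha.symm.trans hab).mul_right (ha.symm.trans hx))
  exact hb.trans (hxb.mul_left (hb.symm.trans hy))

lemma exists_mul_eq (hx : GreenH c x) (hxx : GreenH c (x * x)) (hy : GreenH c y) :
    ∃ z, GreenH c z ∧ x * z = y := by
  obtain ⟨z, hz, rfl⟩ := (hx.symm.trans hxx).exists_mul_left_eq (hx.symm.trans hy)
  exact ⟨z, hx.trans hz, rfl⟩

lemma exists_mul_eq' (hx : GreenH c x) (hxx : GreenH c (x * x)) (hy : GreenH c y) :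
    ∃ z, GreenH c z ∧ z * x = y := by
  obtain ⟨z, hz, rfl⟩ := (hx.symm.trans hxx).exists_mul_right_eq (hx.symm.trans hy)
  exact ⟨z, hx.trans hz, rfl⟩

end GreenH

end Monoid

section Semigroup

variable {S : Type*} [Semigroup S] {a b x y : S}

lemma leR_iff_coe_dvd : leR a b ↔ (b : WithOne S) ∣ a := by
  unfold leR
  constructor
  · rintro (rfl | ⟨c, rfl⟩)
    exacts [dvd_rfl, ⟨c, rfl⟩]
  · rintro ⟨_ | c, hc⟩
    exacts [.inl (WithOne.coe_inj.mp (hc.trans (mul_one _))), .inr ⟨c, WithOne.coe_inj.mp hc⟩]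

lemma leL_iff_coe_rightDvd : leL a b ↔ (b : WithOne S) ∣ᵣ a := by
  unfold leL
  constructor
  · rintro (rfl | ⟨c, rfl⟩)
    exacts [.rfl, ⟨c, rfl⟩]
  · rintro ⟨_ | c, hc⟩
    exacts [.inl (WithOne.coe_inj.mp (hc.trans (one_mul _))), .inr ⟨c, WithOne.coe_inj.mp hc⟩]

lemma eqH_iff_greenH_coe : eqH a b ↔ GreenH (a : WithOne S) b := by
  simp only [eqH, eqL, eqR, leL_iff_coe_rightDvd, leR_iff_coe_dvd]
  exact ⟨fun ⟨⟨h₁, h₂⟩, h₃, h₄⟩ => ⟨h₂, h₁, h₄, h₃⟩, fun ⟨h₁, h₂, h₃, h₄⟩ => ⟨⟨h₂, h₁⟩, h₄, h₃⟩⟩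

lemma exists_coe_eq_of_greenH {z : WithOne S} (h : GreenH (a : WithOne S) z) :
    ∃ s : S, (s : WithOne S) = z := by
  obtain ⟨_ | c, rfl⟩ := h.rightDvd
  exacts [⟨a, (one_mul _).symm⟩, ⟨c * a, rfl⟩]

namespace IsHClass

variable {H : Set S}

lemma mul_mem (hH : IsHClass H) (ha : a ∈ H) (hb : b ∈ H) (hab : a * b ∈ H) :
    ∀ x ∈ H, ∀ y ∈ H, x * y ∈ H := by
  obtain ⟨c, rfl⟩ := hH
  simp only [Set.mem_ofPred_eq, eqH_iff_greenH_coe, WithOne.coe_mul] at *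
  exact fun x hx y hy => ha.mul_mem_of_mul_mem hb hab hx hy

lemma exists_mul_eq (hH : IsHClass H) (hx : x ∈ H) (hxx : x * x ∈ H) (hy : y ∈ H) :
    ∃ z ∈ H, x * z = y := by
  obtain ⟨c, rfl⟩ := hH
  simp only [Set.mem_ofPred_eq, eqH_iff_greenH_coe, WithOne.coe_mul] at *
  obtain ⟨z, hz, hxz⟩ := hx.exists_mul_eq hxx hy
  obtain ⟨s, rfl⟩ := exists_coe_eq_of_greenH hz
  exact ⟨s, hz, WithOne.coe_inj.mp hxz⟩

lemma exists_mul_eq' (hH : IsHClass H) (hx : x ∈ H) (hxx : x * x ∈ H) (hy : y ∈ H) :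
    ∃ z ∈ H, z * x = y := by
  obtain ⟨c, rfl⟩ := hH
  simp only [Set.mem_ofPred_eq, eqH_iff_greenH_coe, WithOne.coe_mul] at *
  obtain ⟨z, hz, hzx⟩ := hx.exists_mul_eq' hxx hy
  obtain ⟨s, rfl⟩ := exists_coe_eq_of_greenH hz
  exact ⟨s, hz, WithOne.coe_inj.mp hzx⟩

end IsHClass

lemma isGroupHClass_of_exists_mul_eq {H : Set S} (hmul : ∀ x ∈ H, ∀ y ∈ H, x * y ∈ H)
    (hne : H.Nonempty) (hright : ∀ x ∈ H, ∀ y ∈ H, ∃ z ∈ H, x * z = y)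
    (hleft : ∀ x ∈ H, ∀ y ∈ H, ∃ z ∈ H, z * x = y) : IsGroupHClass H := by
  obtain ⟨a, ha⟩ := hne
  obtain ⟨e, he, hae⟩ := hright a ha a ha
  obtain ⟨f, hf, hfa⟩ := hleft a ha a ha
  have mul_e : ∀ y ∈ H, y * e = y := fun y hy => by
    obtain ⟨z, -, rfl⟩ := hleft a ha y hy
    rw [mul_assoc, hae]
  have f_mul : ∀ y ∈ H, f * y = y := fun y hy => by
    obtain ⟨z, -, rfl⟩ := hright a ha y hy
    rw [← mul_assoc, hfa]
  have hfe : f = e := (mul_e f hf).symm.trans (f_mul e he)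
  subst hfe
  refine ⟨hmul, f, hf, f_mul f hf, fun x hx => ⟨f_mul x hx, mul_e x hx, ?_⟩⟩
  obtain ⟨r, hr, hxr⟩ := hright x hx f hf
  obtain ⟨l, hl, hlx⟩ := hleft x hx f hf
  have hlr : l = r := calc
    l = l * (x * r) := by rw [hxr, mul_e l hl]
    _ = r := by rw [← mul_assoc, hlx, f_mul r hr]
  exact ⟨r, hr, hxr, hlr ▸ hlx⟩

end Semigroup

theorem Hclass_dichotomy_general {S : Type*} [Semigroup S]
    (H : Set S) (hH : IsHClass H) :
    (∀ a ∈ H, ∀ b ∈ H, a * b ∉ H) ∨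
    ((∀ a ∈ H, ∀ b ∈ H, a * b ∈ H) ∧ IsGroupHClass H) := by
  by_cases hsq : ∃ a ∈ H, ∃ b ∈ H, a * b ∈ H
  · obtain ⟨a, ha, b, hb, hab⟩ := hsq
    have hmul := hH.mul_mem ha hb hab
    refine Or.inr ⟨hmul, isGroupHClass_of_exists_mul_eq hmul ⟨a, ha⟩ ?_ ?_⟩
    · exact fun x hx y hy => hH.exists_mul_eq hx (hmul x hx x hx) hy
    · exact fun x hx y hy => hH.exists_mul_eq' hx (hmul x hx x hx) hy
  · push Not at hsq
    exact Or.inl hsq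

theorem Hclass_dichotomy {S : Type*} [Semigroup S] [Fintype S]
    (H : Set S) (hH : IsHClass H) :
    (∀ a ∈ H, ∀ b ∈ H, a * b ∉ H) ∨
    ((∀ a ∈ H, ∀ b ∈ H, a * b ∈ H) ∧ IsGroupHClass H) :=
  Hclass_dichotomy_general H hH
end
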